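/- arXiv:1112.4352 — 6 statements merged into one kernel-verified Lean document; each statement's English description precedes it below -/
import Mathlib

section
/- For all real x with 0 ≤ x < (π/2)^2, the derivative of the function x ↦ x · cot²(√x) satisfies -1 ≤ (x cot²√x)' ≤ 0. -/
open Real Filter Set Topology

noncomputable def xCotSq (x : ℝ) : ℝ :=
  if x = 0 then 1 else x * (Real.cos (Real.sqrt x) / Real.sin (Real.sqrt x)) ^ 2

lemma sin_div_self_lim : Tendsto (fun t : ℝ => Real.sin t / t) (𝓝[≠] (0:ℝ)) (𝓝 1) := by
  have h := (Real.hasDerivAt_sin 0)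
  rw [hasDerivAt_iff_tendsto_slope] at h
  simp only [Real.sin_zero, Real.cos_zero, sub_zero] at h
  refine h.congr fun t => ?_
  simp [slope_fun_def, div_eq_inv_mul]

lemma sin_div_self_lim' : Tendsto (fun t : ℝ => Real.sin t / t) (𝓝[>] (0:ℝ)) (𝓝 1) :=
  sin_div_self_lim.mono_left (nhdsWithin_mono _ (fun t ht => ne_of_gt ht))

lemma limA : Tendsto (fun t : ℝ => (t * Real.cos t - Real.sin t) / t ^ 3)
    (𝓝[>] (0:ℝ)) (𝓝 (-1/3)) := by
  apply HasDerivAt.lhopital_zero_right_on_Ioo (f' := fun t => -t * Real.sin t)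
    (g' := fun t => 3 * t ^ 2) (b := 1) one_pos
  · intro t _
    have h1 : HasDerivAt (fun t : ℝ => t * Real.cos t - Real.sin t)
        (1 * Real.cos t + t * (-Real.sin t) - Real.cos t) t :=
      ((hasDerivAt_id t).mul (Real.hasDerivAt_cos t)).sub (Real.hasDerivAt_sin t)
    convert h1 using 1
    ring
  · intro t _
    simpa using hasDerivAt_pow 3 t
  · intro t ht
    have := ht.1
    nlinarith
  · have : Tendsto (fun t : ℝ => t * Real.cos t - Real.sin t) (𝓝 0) (𝓝 (0 * Real.cos 0 - Real.sin 0)) := by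
      exact ((continuous_id.mul Real.continuous_cos).sub Real.continuous_sin).tendsto 0
    simpa using this.mono_left nhdsWithin_le_nhds
  · have : Tendsto (fun t : ℝ => t ^ 3) (𝓝 0) (𝓝 (0 ^ 3)) := (continuous_pow 3).tendsto 0
    simpa using this.mono_left nhdsWithin_le_nhds
  · have h : Tendsto (fun t : ℝ => -(Real.sin t / t) / 3) (𝓝[>] (0:ℝ)) (𝓝 (-1/3)) := by
      have := ((sin_div_self_lim').neg).div_const 3
      simpa using this
    apply h.congr'
    filter_upwards [self_mem_nhdsWithin] with t (ht : 0 < t)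
    field_simp

lemma limF : Tendsto (fun t : ℝ => (t ^ 2 * (Real.cos t / Real.sin t) ^ 2 - 1) / t ^ 2)
    (𝓝[>] (0:ℝ)) (𝓝 (-2/3)) := by
  have hts : Tendsto (fun t : ℝ => t / Real.sin t) (𝓝[>] (0:ℝ)) (𝓝 1) := by
    have := sin_div_self_lim'.inv₀ one_ne_zero
    simpa [inv_div] using this
  have hB : Tendsto (fun t : ℝ => Real.cos t + Real.sin t / t) (𝓝[>] (0:ℝ)) (𝓝 2) := by
    have hc : Tendsto (fun t : ℝ => Real.cos t) (𝓝[>] (0:ℝ)) (𝓝 1) := by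
      simpa using (Real.continuous_cos.tendsto 0).mono_left nhdsWithin_le_nhds
    have := hc.add sin_div_self_lim'
    norm_num at this
    exact this
  have hprod : Tendsto (fun t : ℝ =>
      (t * Real.cos t - Real.sin t) / t ^ 3 * (t / Real.sin t) ^ 2 * (Real.cos t + Real.sin t / t))
      (𝓝[>] (0:ℝ)) (𝓝 (-2/3)) := by
    have := (limA.mul (hts.pow 2)).mul hB
    norm_num at this
    convert this using 2
    norm_num
  apply hprod.congr'
  have hmem : Set.Ioo (0:ℝ) 1 ∈ 𝓝[>] (0:ℝ) := Ioo_mem_nhdsGT_of_mem (by norm_num)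
  filter_upwards [hmem] with t ht
  have ht0 : 0 < t := ht.1
  have hsin : 0 < Real.sin t := Real.sin_pos_of_pos_of_lt_pi ht0 (lt_trans ht.2 (by linarith [Real.pi_gt_three]))
  field_simp
  ring

theorem deriv_x_cot_sq_sqrt_bounds :
    ∀ x : ℝ, 0 ≤ x → x < (Real.pi / 2) ^ 2 →
      ∃ d : ℝ, HasDerivWithinAt xCotSq d (Set.Ici 0) x ∧ -1 ≤ d ∧ d ≤ 0 := by
  intro x hx0 hxlt
  rcases eq_or_lt_of_le hx0 with rfl | hx
  · refine ⟨-2/3, ?_, by norm_num, by norm_num⟩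
    rw [hasDerivWithinAt_iff_tendsto_slope]
    have hset : Set.Ici (0:ℝ) \ {0} = Set.Ioi 0 := Set.Ici_sdiff_left
    rw [hset]
    have hsqrt : Tendsto Real.sqrt (𝓝[>] (0:ℝ)) (𝓝[>] (0:ℝ)) := by
      rw [tendsto_nhdsWithin_iff]
      constructor
      · simpa using (Real.continuous_sqrt.tendsto 0).mono_left nhdsWithin_le_nhds
      · filter_upwards [self_mem_nhdsWithin] with y (hy : 0 < y)
        exact Real.sqrt_pos.mpr hy
    have hcomp := limF.comp hsqrt
    apply hcomp.congr'
    filter_upwards [self_mem_nhdsWithin] with y (hy : 0 < y)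
    have hsq : Real.sqrt y ^ 2 = y := Real.sq_sqrt hy.le
    have h0 : xCotSq 0 = 1 := by simp [xCotSq]
    have hyv : xCotSq y = y * (Real.cos (Real.sqrt y) / Real.sin (Real.sqrt y)) ^ 2 := by
      simp [xCotSq, hy.ne']
    rw [Function.comp_apply, slope_def_field, h0, hyv, hsq, sub_zero]
  · -- x > 0
    set t := Real.sqrt x with htdef
    have ht0 : 0 < t := Real.sqrt_pos.mpr hx
    have htlt : t < Real.pi / 2 := by
      have h2 : 0 < Real.pi / 2 := by positivity
      calc t < Real.sqrt ((Real.pi/2)^2) := by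
              exact Real.sqrt_lt_sqrt hx0 hxlt
        _ = Real.pi / 2 := Real.sqrt_sq h2.le
    have hsin : 0 < Real.sin t := Real.sin_pos_of_pos_of_lt_pi ht0 (by linarith [Real.pi_pos])
    have hcos : 0 < Real.cos t := Real.cos_pos_of_mem_Ioo ⟨by linarith, htlt⟩
    have hxt : x = t ^ 2 := (Real.sq_sqrt hx0).symm
    -- derivative construction
    have h1 : HasDerivAt Real.sqrt (1 / (2 * Real.sqrt x)) x := Real.hasDerivAt_sqrt hx.ne'
    have hq : HasDerivAt (fun u : ℝ => Real.cos u / Real.sin u)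
        ((-Real.sin t * Real.sin t - Real.cos t * Real.cos t) / Real.sin t ^ 2) t :=
      (Real.hasDerivAt_cos t).div (Real.hasDerivAt_sin t) hsin.ne'
    have hcomp : HasDerivAt (fun y : ℝ => Real.cos (Real.sqrt y) / Real.sin (Real.sqrt y))
        ((-Real.sin t * Real.sin t - Real.cos t * Real.cos t) / Real.sin t ^ 2 * (1 / (2 * Real.sqrt x))) x :=
      hq.comp x h1
    have hpow := hcomp.pow 2
    have hmul := (hasDerivAt_id x).mul hpow
    set D := (1:ℝ) * (Real.cos (Real.sqrt x) / Real.sin (Real.sqrt x)) ^ 2 +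
        x * (2 * (Real.cos (Real.sqrt x) / Real.sin (Real.sqrt x)) ^ (2-1) *
          ((-Real.sin t * Real.sin t - Real.cos t * Real.cos t) / Real.sin t ^ 2 * (1 / (2 * Real.sqrt x)))) with hDdef
    have hD : HasDerivAt (fun y : ℝ => y * (Real.cos (Real.sqrt y) / Real.sin (Real.sqrt y)) ^ 2) D x := hmul
    have hfinal : HasDerivAt xCotSq D x := by
      apply hD.congr_of_eventuallyEq
      filter_upwards [eventually_ne_nhds hx.ne'] with y hy
      simp [xCotSq, if_neg hy]
    have hDval : D = Real.cos t * (Real.sin t * Real.cos t - t) / Real.sin t ^ 3 := by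
      rw [hDdef, ← htdef, hxt]
      have hpyth := Real.sin_sq_add_cos_sq t
      field_simp
      have e : Real.cos t / Real.sin t * Real.sin t = Real.cos t := div_mul_cancel₀ _ hsin.ne'
      rw [show (2:ℕ) - 1 = 1 from rfl, pow_one]
      linear_combination (-t * Real.cos t) * hpyth + (-t * (Real.sin t ^ 2 + Real.cos t ^ 2)) * e
    refine ⟨D, hfinal.hasDerivWithinAt, ?_, ?_⟩
    · rw [hDval]
      rw [le_div_iff₀ (by positivity)]
      have htan : t < Real.tan t := Real.lt_tan ht0 htlt
      rw [Real.tan_eq_sin_div_cos, lt_div_iff₀ hcos] at htan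
      nlinarith [Real.sin_sq_add_cos_sq t]
    · rw [hDval]
      apply div_nonpos_of_nonpos_of_nonneg _ (by positivity)
      have hslt : Real.sin t * Real.cos t < t := by
        have h2 := Real.sin_lt (x := 2 * t) (by linarith)
        rw [Real.sin_two_mul] at h2
        linarith
      nlinarith
end

section
/- For all real x ≥ 0, the derivative of the function x ↦ x · coth²(√x) satisfies 0 ≤ (x coth²√x)' ≤ 1. -/
open Real

noncomputable def xCothSq (x : ℝ) : ℝ :=
  if x = 0 then 1 else x * (Real.cosh (Real.sqrt x) / Real.sinh (Real.sqrt x)) ^ 2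

/-- For `0 ≤ t`, `sinh t ≤ t * cosh t`. -/
lemma sinh_le_mul_cosh {t : ℝ} (ht : 0 ≤ t) : Real.sinh t ≤ t * Real.cosh t := by
  have hderiv : ∀ s : ℝ, HasDerivAt (fun u => u * Real.cosh u - Real.sinh u)
      (s * Real.sinh s) s := by
    intro s
    have h := ((hasDerivAt_id s).mul (Real.hasDerivAt_cosh s)).sub (Real.hasDerivAt_sinh s)
    exact h.congr_deriv (by simp only [id_eq]; ring)
  have mono : MonotoneOn (fun u => u * Real.cosh u - Real.sinh u) (Set.Ici 0) := by
    apply monotoneOn_of_deriv_nonneg (convex_Ici 0)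
    · exact ((continuous_id.mul Real.continuous_cosh).sub Real.continuous_sinh).continuousOn
    · intro s _
      exact (hderiv s).differentiableAt.differentiableWithinAt
    · intro s hs
      rw [interior_Ici] at hs
      rw [(hderiv s).deriv]
      exact mul_nonneg (le_of_lt hs) (Real.sinh_nonneg_iff.mpr (le_of_lt hs))
  have h0 := mono Set.self_mem_Ici ht ht
  simpa using h0

/-- For `0 ≤ t`, `t ≤ sinh t * cosh t`. -/
lemma self_le_sinh_mul_cosh {t : ℝ} (ht : 0 ≤ t) : t ≤ Real.sinh t * Real.cosh t := by
  rcases eq_or_lt_of_le ht with h | h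
  · simp [← h]
  · have h2 : 2 * t < Real.sinh (2 * t) := Real.self_lt_sinh_iff.mpr (by linarith)
    rw [Real.sinh_two_mul] at h2
    linarith

lemma hasDerivAt_xCothSq {x : ℝ} (hx : 0 < x) :
    HasDerivAt xCothSq
      ((Real.cosh (Real.sqrt x)) ^ 2 / (Real.sinh (Real.sqrt x)) ^ 2
        - Real.sqrt x * Real.cosh (Real.sqrt x) / (Real.sinh (Real.sqrt x)) ^ 3) x := by
  set t := Real.sqrt x with htdef
  have ht : 0 < t := Real.sqrt_pos.mpr hx
  have hs : 0 < Real.sinh t := Real.sinh_pos_iff.mpr ht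
  have ht2 : t ^ 2 = x := Real.sq_sqrt hx.le
  have hsq : HasDerivAt Real.sqrt (1 / (2 * t)) x := Real.hasDerivAt_sqrt hx.ne'
  have hc : HasDerivAt (fun y => Real.cosh (Real.sqrt y)) (Real.sinh t * (1 / (2 * t))) x :=
    (Real.hasDerivAt_cosh t).comp x hsq
  have hsn : HasDerivAt (fun y => Real.sinh (Real.sqrt y)) (Real.cosh t * (1 / (2 * t))) x :=
    (Real.hasDerivAt_sinh t).comp x hsq
  have hq : HasDerivAt (fun y => Real.cosh (Real.sqrt y) / Real.sinh (Real.sqrt y))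
      ((Real.sinh t * (1 / (2 * t)) * Real.sinh t
        - Real.cosh t * (Real.cosh t * (1 / (2 * t)))) / (Real.sinh t) ^ 2) x :=
    hc.div hsn hs.ne'
  have hq2 := hq.pow 2
  have hf := (hasDerivAt_id x).mul hq2
  have heq : (fun y => y * (Real.cosh (Real.sqrt y) / Real.sinh (Real.sqrt y)) ^ 2)
      =ᶠ[nhds x] xCothSq := by
    filter_upwards [eventually_ne_nhds hx.ne'] with y hy
    simp [xCothSq, hy]
  have hf' := hf.congr_of_eventuallyEq heq.symm
  refine hf'.congr_deriv (Eq.symm ?_)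
  simp only [id_eq, Pi.pow_apply, ← htdef]
  rw [← ht2]
  field_simp
  rw [show Real.sinh t ^ 2 - Real.cosh t ^ 2 = -1 by rw [Real.cosh_sq]; ring]
  norm_num
  field_simp
  ring

lemma sinh_div_self_tendsto :
    Filter.Tendsto (fun t : ℝ => Real.sinh t / t) (nhdsWithin 0 (Set.Ioi 0)) (nhds 1) := by
  have h : HasDerivAt Real.sinh 1 0 := by simpa using Real.hasDerivAt_sinh 0
  have h2 := hasDerivAt_iff_tendsto_slope.mp h
  have h3 : Filter.Tendsto (slope Real.sinh 0) (nhdsWithin 0 (Set.Ioi 0)) (nhds 1) :=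
    h2.mono_left (nhdsWithin_mono 0 (fun y hy => ne_of_gt hy))
  refine h3.congr fun t => ?_
  simp [slope_def_field, Real.sinh_zero]

theorem deriv_x_coth_sq_sqrt_bounds :
    ∀ x : ℝ, 0 ≤ x →
      ∃ d : ℝ, HasDerivWithinAt xCothSq d (Set.Ici 0) x ∧ 0 ≤ d ∧ d ≤ 1 := by
  intro x hx
  rcases eq_or_lt_of_le hx with h0 | hx
  · -- x = 0
    subst h0
    refine ⟨2/3, ?_, by norm_num, by norm_num⟩
    rw [hasDerivWithinAt_iff_tendsto_slope, Set.Ici_sdiff_left]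
    -- the limit in terms of t = sqrt y
    have hsinh := sinh_div_self_tendsto
    have hts : Filter.Tendsto (fun t : ℝ => t / Real.sinh t) (nhdsWithin 0 (Set.Ioi 0))
        (nhds 1) := by
      have := hsinh.inv₀ one_ne_zero
      simp only [inv_div, inv_one] at this
      exact this
    -- A : (t cosh t - sinh t)/t^3 → 1/3 by L'Hopital
    have hA : Filter.Tendsto (fun t : ℝ => (t * Real.cosh t - Real.sinh t) / t ^ 3)
        (nhdsWithin 0 (Set.Ioi 0)) (nhds (1/3)) := by
      apply HasDerivAt.lhopital_zero_right_on_Ioo (f' := fun t => t * Real.sinh t)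
        (g' := fun t => 3 * t ^ 2) (a := 0) (b := 1) one_pos
      · intro t _
        have h := ((hasDerivAt_id t).mul (Real.hasDerivAt_cosh t)).sub (Real.hasDerivAt_sinh t)
        exact h.congr_deriv (by simp only [id_eq]; ring)
      · intro t _
        simpa using hasDerivAt_pow 3 t
      · intro t ht
        have : (0:ℝ) < t := ht.1
        positivity
      · have hcont : Continuous (fun t : ℝ => t * Real.cosh t - Real.sinh t) :=
          (continuous_id.mul Real.continuous_cosh).sub Real.continuous_sinh
        have := hcont.tendsto 0
        simp only [Real.cosh_zero, Real.sinh_zero, mul_one, zero_mul, sub_zero, mul_zero] at this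
        exact this.mono_left nhdsWithin_le_nhds
      · have hcont : Continuous (fun t : ℝ => t ^ 3) := by continuity
        have := hcont.tendsto 0
        simp only [ne_eq, OfNat.ofNat_ne_zero, not_false_eq_true, zero_pow] at this
        exact this.mono_left nhdsWithin_le_nhds
      · have h13 : Filter.Tendsto (fun t : ℝ => Real.sinh t / t / 3)
            (nhdsWithin 0 (Set.Ioi 0)) (nhds (1/3)) := by
          simpa using hsinh.div_const 3
        refine h13.congr' ?_
        filter_upwards [self_mem_nhdsWithin] with t ht
        have ht' : t ≠ 0 := ne_of_gt ht
        field_simp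
    -- B → 2
    have hcosh : Filter.Tendsto (fun t : ℝ => Real.cosh t) (nhdsWithin 0 (Set.Ioi 0))
        (nhds 1) := by
      have := Real.continuous_cosh.tendsto 0
      rw [Real.cosh_zero] at this
      exact this.mono_left nhdsWithin_le_nhds
    have hB : Filter.Tendsto
        (fun t : ℝ => (Real.cosh t + Real.sinh t / t) * (t / Real.sinh t) ^ 2)
        (nhdsWithin 0 (Set.Ioi 0)) (nhds 2) := by
      have := (hcosh.add hsinh).mul (hts.pow 2)
      norm_num at this
      exact this
    have hE : Filter.Tendsto
        (fun t : ℝ => (t ^ 2 * Real.cosh t ^ 2 - Real.sinh t ^ 2) / (t ^ 2 * Real.sinh t ^ 2))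
        (nhdsWithin 0 (Set.Ioi 0)) (nhds (2/3)) := by
      have hmul := hA.mul hB
      norm_num at hmul
      refine hmul.congr' ?_
      filter_upwards [self_mem_nhdsWithin] with t ht
      have ht' : (0:ℝ) < t := ht
      have hs : 0 < Real.sinh t := Real.sinh_pos_iff.mpr ht'
      field_simp
      ring
    -- compose with sqrt
    have hsqrt : Filter.Tendsto Real.sqrt (nhdsWithin 0 (Set.Ioi 0))
        (nhdsWithin 0 (Set.Ioi 0)) := by
      rw [tendsto_nhdsWithin_iff]
      constructor
      · have := Real.continuous_sqrt.tendsto 0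
        rw [Real.sqrt_zero] at this
        exact this.mono_left nhdsWithin_le_nhds
      · filter_upwards [self_mem_nhdsWithin] with y hy
        exact Real.sqrt_pos.mpr hy
    have hcomp := hE.comp hsqrt
    refine hcomp.congr' ?_
    filter_upwards [self_mem_nhdsWithin] with y hy
    have hy' : (0:ℝ) < y := hy
    have ht : 0 < Real.sqrt y := Real.sqrt_pos.mpr hy'
    have hs : 0 < Real.sinh (Real.sqrt y) := Real.sinh_pos_iff.mpr ht
    have ht2 : Real.sqrt y ^ 2 = y := Real.sq_sqrt hy'.le
    have h1 : xCothSq y = y * (Real.cosh (Real.sqrt y) / Real.sinh (Real.sqrt y)) ^ 2 := by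
      rw [xCothSq, if_neg hy'.ne']
    have h0 : xCothSq 0 = 1 := by simp [xCothSq]
    simp only [Function.comp_apply, slope_def_field, h1, h0, ht2, sub_zero]
    rw [div_eq_div_iff (by positivity) hy'.ne']
    field_simp
  · -- x > 0
    set t := Real.sqrt x with htdef
    have ht : 0 < t := Real.sqrt_pos.mpr hx
    have hs : 0 < Real.sinh t := Real.sinh_pos_iff.mpr ht
    have hc : 1 ≤ Real.cosh t := Real.one_le_cosh t
    have hc2 : Real.cosh t ^ 2 = Real.sinh t ^ 2 + 1 := Real.cosh_sq t
    have key1 : t ≤ Real.sinh t * Real.cosh t := self_le_sinh_mul_cosh ht.le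
    have key2 : Real.sinh t ≤ t * Real.cosh t := sinh_le_mul_cosh ht.le
    refine ⟨_, (hasDerivAt_xCothSq hx).hasDerivWithinAt, ?_, ?_⟩
    · -- 0 ≤ d
      have hd : (Real.cosh t) ^ 2 / (Real.sinh t) ^ 2 - t * Real.cosh t / (Real.sinh t) ^ 3
          = Real.cosh t * (Real.sinh t * Real.cosh t - t) / (Real.sinh t) ^ 3 := by
        field_simp
      rw [hd]
      apply div_nonneg _ (by positivity)
      apply mul_nonneg (by linarith)
      linarith
    · -- d ≤ 1
      rw [div_sub_div _ _ (by positivity) (by positivity : (Real.sinh t)^3 ≠ 0), div_le_one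
        (by positivity)]
      have h5 : Real.cosh t ^ 2 * Real.sinh t ^ 3
          = Real.sinh t ^ 2 * Real.sinh t ^ 3 + Real.sinh t ^ 3 := by rw [hc2]; ring
      have h6 : Real.sinh t ^ 2 * Real.sinh t ≤ Real.sinh t ^ 2 * (t * Real.cosh t) :=
        mul_le_mul_of_nonneg_left key2 (sq_nonneg _)
      nlinarith [h5, h6]
end

section
/- For all real y ≥ 0, 3y + 2y·sinh²(y) ≥ 3·cosh(y)·sinh(y). -/
open Real

lemma aux_sinh_le (y : ℝ) (hy : 0 ≤ y) : Real.sinh y ≤ y * Real.cosh y := by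
  have key : MonotoneOn (fun x : ℝ => x * Real.cosh x - Real.sinh x) (Set.Ici 0) := by
    apply monotoneOn_of_deriv_nonneg (convex_Ici 0)
    · fun_prop
    · intro x hx
      exact ((differentiable_id.mul Real.differentiable_cosh).sub
        Real.differentiable_sinh).differentiableAt.differentiableWithinAt
    · intro x hx
      simp only [interior_Ici, Set.mem_Ioi] at hx
      have h : HasDerivAt (fun x : ℝ => x * Real.cosh x - Real.sinh x)
          (1 * Real.cosh x + x * Real.sinh x - Real.cosh x) x :=
        ((hasDerivAt_id x).mul (Real.hasDerivAt_cosh x)).sub (Real.hasDerivAt_sinh x)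
      rw [h.deriv]
      have : (0:ℝ) ≤ x * Real.sinh x :=
        mul_nonneg hx.le (Real.sinh_nonneg_iff.2 hx.le)
      linarith
  have := key (Set.self_mem_Ici) (Set.mem_Ici.2 hy) hy
  simp only [Real.sinh_zero, Real.cosh_zero, mul_one, zero_mul, sub_zero, zero_sub, neg_zero] at this
  linarith

theorem sinh_cosh_ineq (y : ℝ) (hy : 0 ≤ y) :
    3 * y + 2 * y * Real.sinh y ^ 2 ≥ 3 * Real.cosh y * Real.sinh y := by
  have key : MonotoneOn
      (fun x : ℝ => 3 * x + 2 * x * Real.sinh x ^ 2 - 3 * Real.cosh x * Real.sinh x)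
      (Set.Ici 0) := by
    apply monotoneOn_of_deriv_nonneg (convex_Ici 0)
    · fun_prop
    · intro x hx
      apply DifferentiableAt.differentiableWithinAt
      fun_prop
    · intro x hx
      simp only [interior_Ici, Set.mem_Ioi] at hx
      have h : HasDerivAt
          (fun x : ℝ => 3 * x + 2 * x * Real.sinh x ^ 2 - 3 * Real.cosh x * Real.sinh x)
          (3 * 1 + ((2 * 1) * Real.sinh x ^ 2 + (2 * x) * (2 * Real.sinh x ^ 1 * Real.cosh x))
            - ((3 * Real.sinh x) * Real.sinh x + (3 * Real.cosh x) * Real.cosh x)) x := by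
        have h1 : HasDerivAt (fun x : ℝ => 3 * x) (3 * 1) x :=
          (hasDerivAt_id x).const_mul 3
        have h2 : HasDerivAt (fun x : ℝ => 2 * x) (2 * 1) x :=
          (hasDerivAt_id x).const_mul 2
        have h3 : HasDerivAt (fun x : ℝ => Real.sinh x ^ 2)
            (2 * Real.sinh x ^ 1 * Real.cosh x) x :=
          (Real.hasDerivAt_sinh x).pow 2
        have h4 : HasDerivAt (fun x : ℝ => 3 * Real.cosh x) (3 * Real.sinh x) x :=
          (Real.hasDerivAt_cosh x).const_mul 3
        exact (h1.add (h2.mul h3)).sub (h4.mul (Real.hasDerivAt_sinh x))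
      rw [h.deriv]
      have hcosh : Real.cosh x ^ 2 = 1 + Real.sinh x ^ 2 := by
        rw [Real.cosh_sq]; ring
      have hs : 0 ≤ Real.sinh x := Real.sinh_nonneg_iff.2 hx.le
      have hle : Real.sinh x ≤ x * Real.cosh x := aux_sinh_le x hx.le
      have : Real.sinh x * Real.sinh x ≤ Real.sinh x * (x * Real.cosh x) :=
        mul_le_mul_of_nonneg_left hle hs
      nlinarith [this]
  have := key (Set.self_mem_Ici) (Set.mem_Ici.2 hy) hy
  simp only [Real.sinh_zero, Real.cosh_zero] at this
  linarith
end

section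
/- Let κ ≤ K be real numbers and define cot_K r = (sin_K r)'/(sin_K r), where sin_K r = sin(r√K)/√K for K > 0, sin_0 r = r, and sin_K r = sinh(r√(-K))/√(-K) for K < 0. Then for all r in (0, π/(2√(K⁺))) (with π/(2√(K⁺)) = ∞ if K ≤ 0), one has (cot_K r)² - (cot_κ r)² ≥ -(K - κ). -/
open Real Set

lemma sinh_lt_mul_cosh {x : ℝ} (hx : 0 < x) : Real.sinh x < x * Real.cosh x := by
  have h : StrictMonoOn (fun y => y * Real.cosh y - Real.sinh y) (Set.Ici 0) := by
    apply strictMonoOn_of_deriv_pos (convex_Ici 0)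
    · fun_prop
    · intro y hy
      rw [interior_Ici] at hy
      have h1 : HasDerivAt (fun y => y * Real.cosh y - Real.sinh y)
          (1 * Real.cosh y + y * Real.sinh y - Real.cosh y) y :=
        ((hasDerivAt_id y).mul (Real.hasDerivAt_cosh y)).sub (Real.hasDerivAt_sinh y)
      rw [h1.deriv]
      have hy' : (0:ℝ) < y := hy
      have := Real.sinh_pos_iff.2 hy'
      nlinarith
  have := h Set.self_mem_Ici hx.le hx
  simpa using this

lemma mul_cos_lt_sin {x : ℝ} (hx : 0 < x) (hx2 : x < Real.pi / 2) :
    x * Real.cos x < Real.sin x := by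
  have hc : 0 < Real.cos x := Real.cos_pos_of_mem_Ioo ⟨by linarith [Real.pi_pos], hx2⟩
  have := Real.lt_tan hx hx2
  rw [Real.tan_eq_sin_div_cos, lt_div_iff₀ hc] at this
  linarith

lemma sinc_anti : AntitoneOn (fun x => Real.sin x / x) (Set.Ioo 0 (Real.pi / 2)) := by
  apply StrictAntiOn.antitoneOn
  apply strictAntiOn_of_deriv_neg (convex_Ioo 0 (Real.pi / 2))
  · apply ContinuousOn.div Real.continuousOn_sin continuousOn_id
    intro x hx; exact hx.1.ne'
  · intro x hx
    rw [interior_Ioo] at hx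
    have h1 : HasDerivAt (fun x => Real.sin x / x) ((Real.cos x * x - Real.sin x * 1) / x ^ 2) x :=
      (Real.hasDerivAt_sin x).div (hasDerivAt_id x) hx.1.ne'
    rw [h1.deriv]
    have := mul_cos_lt_sin hx.1 hx.2
    have hx2 : (0:ℝ) < x ^ 2 := pow_pos hx.1 2
    apply div_neg_of_neg_of_pos _ hx2
    nlinarith

lemma sinhc_mono : MonotoneOn (fun x => Real.sinh x / x) (Set.Ioi 0) := by
  apply StrictMonoOn.monotoneOn
  apply strictMonoOn_of_deriv_pos (convex_Ioi 0)
  · apply ContinuousOn.div Real.continuous_sinh.continuousOn continuousOn_id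
    intro x hx; exact (ne_of_gt hx)
  · intro x hx
    rw [interior_Ioi] at hx
    have h1 : HasDerivAt (fun x => Real.sinh x / x)
        ((Real.cosh x * x - Real.sinh x * 1) / x ^ 2) x :=
      (Real.hasDerivAt_sinh x).div (hasDerivAt_id x) hx.ne'
    rw [h1.deriv]
    have hx0 : (0:ℝ) < x := hx
    have := sinh_lt_mul_cosh hx0
    have hx2 : (0:ℝ) < x ^ 2 := pow_pos hx0 2
    apply div_pos _ hx2
    nlinarith

lemma mono_sin {s t : ℝ} (hs : 0 < s) (hst : s ≤ t) (ht : t < Real.pi / 2) :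
    s ^ 2 / Real.sin s ^ 2 ≤ t ^ 2 / Real.sin t ^ 2 := by
  have hss : Real.sin t / t ≤ Real.sin s / s :=
    sinc_anti ⟨hs, lt_of_le_of_lt hst ht⟩ ⟨lt_of_lt_of_le hs hst, ht⟩ hst
  have hsinS : 0 < Real.sin s := Real.sin_pos_of_pos_of_lt_pi hs
    (by linarith [Real.pi_pos, lt_of_le_of_lt hst ht])
  have hsinT : 0 < Real.sin t := Real.sin_pos_of_pos_of_lt_pi (lt_of_lt_of_le hs hst)
    (by linarith [Real.pi_pos])
  have ht0 : 0 < t := lt_of_lt_of_le hs hst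
  rw [div_le_div_iff₀ (by positivity) (by positivity)] at hss ⊢
  nlinarith [mul_le_mul hss hss (by positivity) (by positivity)]

lemma mono_sinh {s t : ℝ} (hs : 0 < s) (hst : s ≤ t) :
    t ^ 2 / Real.sinh t ^ 2 ≤ s ^ 2 / Real.sinh s ^ 2 := by
  have ht0 : 0 < t := lt_of_lt_of_le hs hst
  have hss : Real.sinh s / s ≤ Real.sinh t / t := sinhc_mono hs ht0 hst
  have hsinS : 0 < Real.sinh s := Real.sinh_pos_iff.2 hs
  have hsinT : 0 < Real.sinh t := Real.sinh_pos_iff.2 ht0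
  rw [div_le_div_iff₀ (by positivity) (by positivity)] at hss ⊢
  nlinarith [mul_le_mul hss hss (by positivity) (by positivity)]

noncomputable def sinK (K r : ℝ) : ℝ :=
  if 0 < K then Real.sin (r * Real.sqrt K) / Real.sqrt K
  else if K < 0 then Real.sinh (r * Real.sqrt (-K)) / Real.sqrt (-K)
  else r

noncomputable def cotK (K r : ℝ) : ℝ := deriv (sinK K) r / sinK K r

lemma cotK_zero {r : ℝ} (hr : r ≠ 0) : cotK 0 r ^ 2 + 0 = 1 / r ^ 2 := by
  have hfun : sinK 0 = fun x : ℝ => x := funext fun x => by simp [sinK]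
  rw [cotK, hfun]
  simp [div_pow]

lemma cotK_pos {K r : ℝ} (hK : 0 < K) (hr : 0 < r) (hlt : r * Real.sqrt K < Real.pi / 2) :
    cotK K r ^ 2 + K = ((r * Real.sqrt K) ^ 2 / Real.sin (r * Real.sqrt K) ^ 2) / r ^ 2 := by
  have hsqK : (0:ℝ) < Real.sqrt K := Real.sqrt_pos.2 hK
  have hs : 0 < r * Real.sqrt K := by positivity
  have hsin : 0 < Real.sin (r * Real.sqrt K) :=
    Real.sin_pos_of_pos_of_lt_pi hs (by linarith [Real.pi_pos])
  have hfun : sinK K = fun x : ℝ => Real.sin (x * Real.sqrt K) / Real.sqrt K :=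
    funext fun x => if_pos hK
  have hd : HasDerivAt (fun x : ℝ => Real.sin (x * Real.sqrt K) / Real.sqrt K)
      (Real.cos (r * Real.sqrt K) * (1 * Real.sqrt K) / Real.sqrt K) r :=
    (((Real.hasDerivAt_sin _).comp r ((hasDerivAt_id r).mul_const _))).div_const _
  have hK2 : Real.sqrt K ^ 2 = K := Real.sq_sqrt hK.le
  rw [cotK, hfun, hd.deriv]
  field_simp
  linear_combination (Real.cos (r * Real.sqrt K) ^ 2 - 1) * hK2
    + K * Real.sin_sq_add_cos_sq (r * Real.sqrt K)

lemma cotK_neg {K r : ℝ} (hK : K < 0) (hr : 0 < r) :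
    cotK K r ^ 2 + K = ((r * Real.sqrt (-K)) ^ 2 / Real.sinh (r * Real.sqrt (-K)) ^ 2) / r ^ 2 := by
  have hK' : (0:ℝ) < -K := by linarith
  have hsqK : (0:ℝ) < Real.sqrt (-K) := Real.sqrt_pos.2 hK'
  have hs : 0 < r * Real.sqrt (-K) := by positivity
  have hsinh : 0 < Real.sinh (r * Real.sqrt (-K)) := Real.sinh_pos_iff.2 hs
  have hfun : sinK K = fun x : ℝ => Real.sinh (x * Real.sqrt (-K)) / Real.sqrt (-K) :=
    funext fun x => by rw [sinK, if_neg (by linarith), if_pos hK]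
  have hd : HasDerivAt (fun x : ℝ => Real.sinh (x * Real.sqrt (-K)) / Real.sqrt (-K))
      (Real.cosh (r * Real.sqrt (-K)) * (1 * Real.sqrt (-K)) / Real.sqrt (-K)) r :=
    (((Real.hasDerivAt_sinh _).comp r ((hasDerivAt_id r).mul_const _))).div_const _
  have hK2 : Real.sqrt (-K) ^ 2 = -K := Real.sq_sqrt hK'.le
  rw [cotK, hfun, hd.deriv]
  field_simp
  linear_combination (Real.cosh (r * Real.sqrt (-K)) ^ 2 - 1) * hK2
    + (-K) * Real.cosh_sq_sub_sinh_sq (r * Real.sqrt (-K))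

lemma one_le_ratio_sin {s : ℝ} (hs : 0 < s) (hlt : s < Real.pi / 2) :
    1 ≤ s ^ 2 / Real.sin s ^ 2 := by
  have hsin : 0 < Real.sin s := Real.sin_pos_of_pos_of_lt_pi hs (by linarith [Real.pi_pos])
  have := Real.sin_lt hs
  rw [le_div_iff₀ (by positivity)]
  nlinarith

lemma ratio_sinh_le_one {s : ℝ} (hs : 0 < s) : s ^ 2 / Real.sinh s ^ 2 ≤ 1 := by
  have hsinh : 0 < Real.sinh s := Real.sinh_pos_iff.2 hs
  have := Real.self_lt_sinh_iff.2 hs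
  rw [div_le_one (by positivity)]
  nlinarith

theorem cotK_sq_comparison (κ K : ℝ) (hκK : κ ≤ K) (r : ℝ) (hr : 0 < r)
    (hrK : 0 < K → r < Real.pi / (2 * Real.sqrt K)) :
    (cotK K r) ^ 2 - (cotK κ r) ^ 2 ≥ -(K - κ) := by
  suffices h : cotK κ r ^ 2 + κ ≤ cotK K r ^ 2 + K by linarith
  have hr2 : (0:ℝ) < r ^ 2 := by positivity
  rcases lt_trichotomy K 0 with hK | hK | hK
  · -- K < 0, so κ ≤ K < 0
    have hκ : κ < 0 := lt_of_le_of_lt hκK hK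
    rw [cotK_neg hK hr, cotK_neg hκ hr]
    have hsq1 : (0:ℝ) < Real.sqrt (-K) := Real.sqrt_pos.2 (by linarith)
    have hsq2 : Real.sqrt (-K) ≤ Real.sqrt (-κ) := Real.sqrt_le_sqrt (by linarith)
    have hmono : (r * Real.sqrt (-κ)) ^ 2 / Real.sinh (r * Real.sqrt (-κ)) ^ 2 ≤
        (r * Real.sqrt (-K)) ^ 2 / Real.sinh (r * Real.sqrt (-K)) ^ 2 :=
      mono_sinh (by positivity) (by nlinarith)
    exact div_le_div_of_nonneg_right hmono hr2.le |>.trans le_rfl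
  · -- K = 0
    subst hK
    rcases lt_or_eq_of_le hκK with hκ | hκ
    · rw [cotK_zero hr.ne', cotK_neg hκ hr]
      have hsq : (0:ℝ) < Real.sqrt (-κ) := Real.sqrt_pos.2 (by linarith)
      have h1 := ratio_sinh_le_one (s := r * Real.sqrt (-κ)) (by positivity)
      exact div_le_div_of_nonneg_right h1 hr2.le
    · subst hκ; exact le_rfl
  · -- 0 < K
    have hsqK : (0:ℝ) < Real.sqrt K := Real.sqrt_pos.2 hK
    have hltK : r * Real.sqrt K < Real.pi / 2 := by
      have h := hrK hK
      rw [lt_div_iff₀ (by positivity)] at h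
      linarith
    rw [cotK_pos hK hr hltK]
    rcases lt_trichotomy κ 0 with hκ | hκ | hκ
    · rw [cotK_neg hκ hr]
      have hsq : (0:ℝ) < Real.sqrt (-κ) := Real.sqrt_pos.2 (by linarith)
      have h1 := ratio_sinh_le_one (s := r * Real.sqrt (-κ)) (by positivity)
      have h2 := one_le_ratio_sin (s := r * Real.sqrt K) (by positivity) hltK
      exact div_le_div_of_nonneg_right (h1.trans h2) hr2.le
    · subst hκ
      rw [cotK_zero hr.ne']
      have h2 := one_le_ratio_sin (s := r * Real.sqrt K) (by positivity) hltK
      exact div_le_div_of_nonneg_right h2 hr2.le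
    · have hsqκ : (0:ℝ) < Real.sqrt κ := Real.sqrt_pos.2 hκ
      have hsq2 : Real.sqrt κ ≤ Real.sqrt K := Real.sqrt_le_sqrt hκK
      rw [cotK_pos hκ hr (by nlinarith)]
      exact div_le_div_of_nonneg_right
        (mono_sin (by positivity) (by nlinarith) hltK) hr2.le
end

section
/- Let u be a harmonic function on the ball B(0,R) ⊂ ℝ² and define q(r) = ∫_{0}^{2π} u(r cos θ, r sin θ)² r dθ for 0 < r < R. Then log q is a convex function of log r. -/
open Real Set Metric MeasureTheory intervalIntegral Filter Complex
open scoped Topology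

noncomputable section

namespace LogCvxHarm

/-- The point `(e^t cos θ, e^t sin θ)`. -/
def pt (t θ : ℝ) : ℝ × ℝ := (Real.exp t * Real.cos θ, Real.exp t * Real.sin θ)

/-- Rotation by 90 degrees. -/
def rot (p : ℝ × ℝ) : ℝ × ℝ := (-p.2, p.1)

variable (u : ℝ × ℝ → ℝ)

/-- first derivative -/
def g : ℝ × ℝ → (ℝ × ℝ) →L[ℝ] ℝ := fun p => fderiv ℝ u p

/-- second derivative -/
def g2 : ℝ × ℝ → (ℝ × ℝ) →L[ℝ] ((ℝ × ℝ) →L[ℝ] ℝ) := fun p => fderiv ℝ (g u) p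

def V (t θ : ℝ) : ℝ := u (pt t θ)
def Vt (t θ : ℝ) : ℝ := g u (pt t θ) (pt t θ)
def Vh (t θ : ℝ) : ℝ := g u (pt t θ) (rot (pt t θ))
def Vtt (t θ : ℝ) : ℝ := g2 u (pt t θ) (pt t θ) (pt t θ) + Vt u t θ
def Vhh (t θ : ℝ) : ℝ := g2 u (pt t θ) (rot (pt t θ)) (rot (pt t θ)) - Vt u t θ

lemma lin_expand (A : (ℝ × ℝ) →L[ℝ] ℝ) (v : ℝ × ℝ) :
    A v = v.1 * A (1, 0) + v.2 * A (0, 1) := by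
  have hv : v = v.1 • ((1 : ℝ), (0 : ℝ)) + v.2 • ((0 : ℝ), (1 : ℝ)) := by
    simp [Prod.ext_iff]
  conv_lhs => rw [hv]
  simp only [map_add, ContinuousLinearMap.map_smul, smul_eq_mul]

lemma bilin_expand (A : (ℝ × ℝ) →L[ℝ] (ℝ × ℝ) →L[ℝ] ℝ) (v w : ℝ × ℝ) :
    A v w = v.1 * w.1 * A (1, 0) (1, 0) + v.1 * w.2 * A (1, 0) (0, 1)
      + v.2 * w.1 * A (0, 1) (1, 0) + v.2 * w.2 * A (0, 1) (0, 1) := by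
  have hv : v = v.1 • ((1 : ℝ), (0 : ℝ)) + v.2 • ((0 : ℝ), (1 : ℝ)) := by
    simp [Prod.ext_iff]
  have hw : w = w.1 • ((1 : ℝ), (0 : ℝ)) + w.2 • ((0 : ℝ), (1 : ℝ)) := by
    simp [Prod.ext_iff]
  conv_lhs => rw [hv, hw]
  simp only [map_add, ContinuousLinearMap.map_smul, ContinuousLinearMap.add_apply,
    ContinuousLinearMap.smul_apply, smul_eq_mul]
  ring

variable {R : ℝ} (hR : 0 < R) (hu : ContDiffOn ℝ 2 u (Metric.ball (0 : ℝ × ℝ) R))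

include hR in
lemma pt_mem {t : ℝ} (ht : t < Real.log R) (θ : ℝ) :
    pt t θ ∈ Metric.ball (0 : ℝ × ℝ) R := by
  have hexp : Real.exp t < R := by
    calc Real.exp t < Real.exp (Real.log R) := Real.exp_lt_exp.2 ht
    _ = R := Real.exp_log hR
  rw [mem_ball_zero_iff]
  have h1 : ‖(pt t θ).1‖ ≤ Real.exp t := by
    simp only [pt, Real.norm_eq_abs, abs_mul, Real.abs_exp]
    nlinarith [abs_cos_le_one θ, Real.exp_pos t, abs_nonneg (Real.cos θ)]
  have h2 : ‖(pt t θ).2‖ ≤ Real.exp t := by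
    simp only [pt, Real.norm_eq_abs, abs_mul, Real.abs_exp]
    nlinarith [abs_sin_le_one θ, Real.exp_pos t, abs_nonneg (Real.sin θ)]
  calc ‖pt t θ‖ = max ‖(pt t θ).1‖ ‖(pt t θ).2‖ := rfl
  _ ≤ Real.exp t := max_le h1 h2
  _ < R := hexp

include hu in
lemma hasFDerivAt_u {p : ℝ × ℝ} (hp : p ∈ Metric.ball (0 : ℝ × ℝ) R) :
    HasFDerivAt u (g u p) p := by
  have := (hu.differentiableOn (by norm_num)).differentiableAt
    (isOpen_ball.mem_nhds hp)
  exact this.hasFDerivAt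

include hu in
lemma contDiffOn_g : ContDiffOn ℝ 1 (g u) (Metric.ball (0 : ℝ × ℝ) R) :=
  hu.fderiv_of_isOpen isOpen_ball (by norm_num)

include hu in
lemma hasFDerivAt_g {p : ℝ × ℝ} (hp : p ∈ Metric.ball (0 : ℝ × ℝ) R) :
    HasFDerivAt (g u) (g2 u p) p := by
  have := ((contDiffOn_g u hu).differentiableOn (by norm_num)).differentiableAt
    (isOpen_ball.mem_nhds hp)
  exact this.hasFDerivAt

include hu in
lemma cont_g : ContinuousOn (g u) (Metric.ball (0 : ℝ × ℝ) R) :=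
  (contDiffOn_g u hu).continuousOn

include hu in
lemma cont_g2 : ContinuousOn (g2 u) (Metric.ball (0 : ℝ × ℝ) R) :=
  ((contDiffOn_g u hu).fderiv_of_isOpen (m := 0) isOpen_ball (by norm_num)).continuousOn


include hu in
lemma sliceD1 (x y : ℝ) (h : (x, y) ∈ Metric.ball (0 : ℝ × ℝ) R) :
    HasDerivAt (fun s => u (s, y)) (g u (x, y) (1, 0)) x :=
  (hasFDerivAt_u u hu h).comp_hasDerivAt x ((hasDerivAt_id x).prodMk (hasDerivAt_const x y))

include hu in
lemma sliceD2 (x y : ℝ) (h : (x, y) ∈ Metric.ball (0 : ℝ × ℝ) R) :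
    HasDerivAt (fun s => u (x, s)) (g u (x, y) (0, 1)) y :=
  (hasFDerivAt_u u hu h).comp_hasDerivAt y ((hasDerivAt_const y x).prodMk (hasDerivAt_id y))

include hu in
lemma sliceDD1 (x y : ℝ) (h : (x, y) ∈ Metric.ball (0 : ℝ × ℝ) R) :
    HasDerivAt (fun s => g u (s, y) (1, 0)) (g2 u (x, y) (1, 0) (1, 0)) x := by
  have hA := (ContinuousLinearMap.apply ℝ ℝ (((1 : ℝ), (0 : ℝ)))).hasFDerivAt
    (x := g u (x, y))
  have h1 := (hA.comp (x, y) (hasFDerivAt_g u hu h)).comp_hasDerivAt x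
    ((hasDerivAt_id x).prodMk (hasDerivAt_const x y))
  simpa [Function.comp_def] using h1

include hu in
lemma sliceDD2 (x y : ℝ) (h : (x, y) ∈ Metric.ball (0 : ℝ × ℝ) R) :
    HasDerivAt (fun s => g u (x, s) (0, 1)) (g2 u (x, y) (0, 1) (0, 1)) y := by
  have hA := (ContinuousLinearMap.apply ℝ ℝ (((0 : ℝ), (1 : ℝ)))).hasFDerivAt
    (x := g u (x, y))
  have h1 := (hA.comp (x, y) (hasFDerivAt_g u hu h)).comp_hasDerivAt y
    ((hasDerivAt_const y x).prodMk (hasDerivAt_id y))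
  simpa [Function.comp_def] using h1

include hu in
lemma lap (hharm : ∀ p ∈ Metric.ball (0 : ℝ × ℝ) R,
      deriv (fun s => deriv (fun t => u (t, p.2)) s) p.1 +
        deriv (fun s => deriv (fun t => u (p.1, t)) s) p.2 = 0)
    {p : ℝ × ℝ} (hp : p ∈ Metric.ball (0 : ℝ × ℝ) R) :
    g2 u p (1, 0) (1, 0) + g2 u p (0, 1) (0, 1) = 0 := by
  have h := hharm p hp
  have hmem1 : ∀ᶠ s in 𝓝 p.1, (s, p.2) ∈ Metric.ball (0 : ℝ × ℝ) R := by
    have hc : ContinuousAt (fun s : ℝ => (s, p.2)) p.1 := by fun_prop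
    exact hc.preimage_mem_nhds (isOpen_ball.mem_nhds (by simpa using hp))
  have hmem2 : ∀ᶠ s in 𝓝 p.2, (p.1, s) ∈ Metric.ball (0 : ℝ × ℝ) R := by
    have hc : ContinuousAt (fun s : ℝ => (p.1, s)) p.2 := by fun_prop
    exact hc.preimage_mem_nhds (isOpen_ball.mem_nhds (by simpa using hp))
  have e1 : deriv (fun s => deriv (fun t => u (t, p.2)) s) p.1 = g2 u p (1, 0) (1, 0) := by
    have hev : (fun s => deriv (fun t => u (t, p.2)) s) =ᶠ[𝓝 p.1]
        (fun s => g u (s, p.2) (1, 0)) := by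
      filter_upwards [hmem1] with s hs
      exact (sliceD1 u hu s p.2 hs).deriv
    rw [hev.deriv_eq]
    have h2 := sliceDD1 u hu p.1 p.2 (by simpa using hp)
    simpa using h2.deriv
  have e2 : deriv (fun s => deriv (fun t => u (p.1, t)) s) p.2 = g2 u p (0, 1) (0, 1) := by
    have hev : (fun s => deriv (fun t => u (p.1, t)) s) =ᶠ[𝓝 p.2]
        (fun s => g u (p.1, s) (0, 1)) := by
      filter_upwards [hmem2] with s hs
      exact (sliceD2 u hu p.1 s hs).deriv
    rw [hev.deriv_eq]
    have h2 := sliceDD2 u hu p.1 p.2 (by simpa using hp)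
    simpa using h2.deriv
  rw [e1, e2] at h
  exact h

include hu in
lemma clairaut {p : ℝ × ℝ} (hp : p ∈ Metric.ball (0 : ℝ × ℝ) R) (v w : ℝ × ℝ) :
    g2 u p v w = g2 u p w v := by
  have hf : ∀ᶠ y in 𝓝 p, HasFDerivAt u (g u y) y := by
    filter_upwards [isOpen_ball.mem_nhds hp] with y hy
    exact hasFDerivAt_u u hu hy
  exact second_derivative_symmetric_of_eventually hf (hasFDerivAt_g u hu hp) v w

include hu in
lemma harm2 (hharm : ∀ p ∈ Metric.ball (0 : ℝ × ℝ) R,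
      deriv (fun s => deriv (fun t => u (t, p.2)) s) p.1 +
        deriv (fun s => deriv (fun t => u (p.1, t)) s) p.2 = 0)
    {p : ℝ × ℝ} (hp : p ∈ Metric.ball (0 : ℝ × ℝ) R) :
    g2 u p p p + g2 u p (rot p) (rot p) = 0 := by
  have hl := lap u hu hharm hp
  rw [bilin_expand (g2 u p) p p, bilin_expand (g2 u p) (rot p) (rot p)]
  simp only [rot]
  linear_combination (p.1 ^ 2 + p.2 ^ 2) * hl

lemma hasDerivAt_pt_t (t θ : ℝ) : HasDerivAt (fun t => pt t θ) (pt t θ) t :=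
  ((Real.hasDerivAt_exp t).mul_const (Real.cos θ)).prodMk
    ((Real.hasDerivAt_exp t).mul_const (Real.sin θ))

lemma hasDerivAt_pt_h (t θ : ℝ) : HasDerivAt (fun θ => pt t θ) (rot (pt t θ)) θ := by
  have h1 : HasDerivAt (fun φ => Real.exp t * Real.cos φ) (-(Real.exp t * Real.sin θ)) θ := by
    simpa [mul_neg] using (Real.hasDerivAt_cos θ).const_mul (Real.exp t)
  have h2 : HasDerivAt (fun φ => Real.exp t * Real.sin φ) (Real.exp t * Real.cos θ) θ :=
    (Real.hasDerivAt_sin θ).const_mul (Real.exp t)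
  exact h1.prodMk h2

lemma hasDerivAt_rot_pt (t θ : ℝ) :
    HasDerivAt (fun θ => rot (pt t θ)) (rot (rot (pt t θ))) θ := by
  have h1 : HasDerivAt (fun φ => -(Real.exp t * Real.sin φ)) (-(Real.exp t * Real.cos θ)) θ :=
    ((Real.hasDerivAt_sin θ).const_mul (Real.exp t)).neg
  have h2 : HasDerivAt (fun φ => Real.exp t * Real.cos φ) (-(Real.exp t * Real.sin θ)) θ := by
    simpa [mul_neg] using (Real.hasDerivAt_cos θ).const_mul (Real.exp t)
  exact h1.prodMk h2

include hR hu in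
lemma hV_t {t : ℝ} (ht : t < Real.log R) (θ : ℝ) :
    HasDerivAt (fun s => V u s θ) (Vt u t θ) t :=
  (hasFDerivAt_u u hu (pt_mem hR ht θ)).comp_hasDerivAt t (hasDerivAt_pt_t t θ)

include hR hu in
lemma hV_h {t : ℝ} (ht : t < Real.log R) (θ : ℝ) :
    HasDerivAt (fun φ => V u t φ) (Vh u t θ) θ :=
  (hasFDerivAt_u u hu (pt_mem hR ht θ)).comp_hasDerivAt θ (hasDerivAt_pt_h t θ)

include hR hu in
lemma hVt_t {t : ℝ} (ht : t < Real.log R) (θ : ℝ) :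
    HasDerivAt (fun s => Vt u s θ) (Vtt u t θ) t := by
  have hc : HasDerivAt (fun s => g u (pt s θ)) (g2 u (pt t θ) (pt t θ)) t :=
    (hasFDerivAt_g u hu (pt_mem hR ht θ)).comp_hasDerivAt t (hasDerivAt_pt_t t θ)
  simpa [Vtt, Vt] using hc.clm_apply (hasDerivAt_pt_t t θ)

include hR hu in
lemma hVh_h {t : ℝ} (ht : t < Real.log R) (θ : ℝ) :
    HasDerivAt (fun φ => Vh u t φ) (Vhh u t θ) θ := by
  have hc : HasDerivAt (fun φ => g u (pt t φ)) (g2 u (pt t θ) (rot (pt t θ))) θ :=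
    (hasFDerivAt_g u hu (pt_mem hR ht θ)).comp_hasDerivAt θ (hasDerivAt_pt_h t θ)
  have key := hc.clm_apply (hasDerivAt_rot_pt t θ)
  have hrr : rot (rot (pt t θ)) = -(pt t θ) := rfl
  rw [hrr, map_neg] at key
  simpa [Vhh, Vh, Vt, sub_eq_add_neg] using key

include hR hu in
lemma VttVhh (hharm : ∀ p ∈ Metric.ball (0 : ℝ × ℝ) R,
      deriv (fun s => deriv (fun t => u (t, p.2)) s) p.1 +
        deriv (fun s => deriv (fun t => u (p.1, t)) s) p.2 = 0)
    {t : ℝ} (ht : t < Real.log R) (θ : ℝ) : Vtt u t θ + Vhh u t θ = 0 := by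
  have h := harm2 u hu hharm (pt_mem hR ht θ)
  simp only [Vtt, Vhh]
  linarith


/-- the parameter domain -/
def dom (R : ℝ) : Set (ℝ × ℝ) := Iio (Real.log R) ×ˢ (univ : Set ℝ)

lemma cont_pt2 : Continuous (fun z : ℝ × ℝ => pt z.1 z.2) := by
  unfold pt; fun_prop

lemma cont_rot : Continuous rot := by unfold rot; fun_prop

include hR in
lemma maps_pt : MapsTo (fun z : ℝ × ℝ => pt z.1 z.2) (dom R) (Metric.ball (0 : ℝ × ℝ) R) :=
  fun z hz => pt_mem hR hz.1 z.2

include hR hu in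
lemma contV : ContinuousOn (fun z : ℝ × ℝ => V u z.1 z.2) (dom R) :=
  hu.continuousOn.comp cont_pt2.continuousOn (maps_pt hR)

include hR hu in
lemma cont_g_pt : ContinuousOn (fun z : ℝ × ℝ => g u (pt z.1 z.2)) (dom R) :=
  (cont_g u hu).comp cont_pt2.continuousOn (maps_pt hR)

include hR hu in
lemma cont_g2_pt : ContinuousOn (fun z : ℝ × ℝ => g2 u (pt z.1 z.2)) (dom R) :=
  (cont_g2 u hu).comp cont_pt2.continuousOn (maps_pt hR)

include hR hu in
lemma contVt : ContinuousOn (fun z : ℝ × ℝ => Vt u z.1 z.2) (dom R) :=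
  (cont_g_pt u hR hu).clm_apply cont_pt2.continuousOn

include hR hu in
lemma contVh : ContinuousOn (fun z : ℝ × ℝ => Vh u z.1 z.2) (dom R) :=
  (cont_g_pt u hR hu).clm_apply (cont_rot.comp cont_pt2).continuousOn

include hR hu in
lemma cont_g2_pt_pt :
    ContinuousOn (fun z : ℝ × ℝ => g2 u (pt z.1 z.2) (pt z.1 z.2)) (dom R) :=
  (cont_g2_pt u hR hu).clm_apply cont_pt2.continuousOn

include hR hu in
lemma contVtt : ContinuousOn (fun z : ℝ × ℝ => Vtt u z.1 z.2) (dom R) :=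
  ((cont_g2_pt_pt u hR hu).clm_apply cont_pt2.continuousOn).add (contVt u hR hu)

include hR hu in
lemma cont_g2_pt_rot :
    ContinuousOn (fun z : ℝ × ℝ => g2 u (pt z.1 z.2) (rot (pt z.1 z.2))) (dom R) :=
  (cont_g2_pt u hR hu).clm_apply (cont_rot.comp cont_pt2).continuousOn

include hR hu in
lemma contVhh : ContinuousOn (fun z : ℝ × ℝ => Vhh u z.1 z.2) (dom R) :=
  ((cont_g2_pt_rot u hR hu).clm_apply (cont_rot.comp cont_pt2).continuousOn).sub (contVt u hR hu)

/-- slices are continuous -/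
lemma cont_slice {F : ℝ → ℝ → ℝ} {R : ℝ}
    (hF : ContinuousOn (fun z : ℝ × ℝ => F z.1 z.2) (dom R)) {t : ℝ} (ht : t < Real.log R) :
    Continuous (F t) := by
  rw [← continuousOn_univ]
  have hmap : MapsTo (fun θ : ℝ => (t, θ)) univ (dom R) := fun θ _ => ⟨ht, trivial⟩
  exact hF.comp (Continuous.continuousOn (by fun_prop)) hmap

/-- Differentiation under the interval integral. -/
lemma param_deriv {F F' : ℝ → ℝ → ℝ} {R : ℝ}
    (hF : ContinuousOn (fun z : ℝ × ℝ => F z.1 z.2) (dom R))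
    (hF' : ContinuousOn (fun z : ℝ × ℝ => F' z.1 z.2) (dom R))
    (hd : ∀ t θ : ℝ, t < Real.log R → HasDerivAt (fun s => F s θ) (F' t θ) t)
    {t₀ : ℝ} (ht₀ : t₀ < Real.log R) :
    HasDerivAt (fun t => ∫ θ in (0:ℝ)..(2 * π), F t θ)
      (∫ θ in (0:ℝ)..(2 * π), F' t₀ θ) t₀ := by
  set L := Real.log R
  set ε : ℝ := (L - t₀) / 2 with hε
  have hε_pos : 0 < ε := by simp only [hε]; linarith
  have hlt : ∀ x ∈ Metric.ball t₀ ε, x < L := by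
    intro x hx
    rw [mem_ball, Real.dist_eq] at hx
    have := abs_lt.1 hx
    linarith [this.2]
  set K : Set (ℝ × ℝ) := Icc (t₀ - ε) (t₀ + ε) ×ˢ Icc 0 (2 * π) with hK
  have hKc : IsCompact K := isCompact_Icc.prod isCompact_Icc
  have hKΩ : K ⊆ dom R := by
    rintro ⟨x, θ⟩ ⟨hx, _⟩
    exact ⟨lt_of_le_of_lt hx.2 (by simp only [hε]; linarith), trivial⟩
  obtain ⟨M, hM⟩ := hKc.exists_bound_of_continuousOn (hF'.mono hKΩ)
  have h2π : (0:ℝ) ≤ 2 * π := by positivity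
  have key := intervalIntegral.hasDerivAt_integral_of_dominated_loc_of_deriv_le
    (F := F) (F' := F') (x₀ := t₀) (a := 0) (b := 2 * π) (μ := volume)
    (bound := fun _ => M) (Metric.ball_mem_nhds t₀ hε_pos)
    ?_ ?_ ?_ ?_ ?_ ?_
  · exact key.2
  · filter_upwards [Iio_mem_nhds ht₀] with x hx
    exact (cont_slice hF hx).aestronglyMeasurable
  · exact (cont_slice hF ht₀).intervalIntegrable 0 (2 * π)
  · exact (cont_slice hF' ht₀).aestronglyMeasurable
  · refine ae_of_all _ fun θ hθ x hx => ?_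
    have hθ' : θ ∈ Icc 0 (2 * π) := by
      rw [uIoc_of_le h2π] at hθ
      exact Ioc_subset_Icc_self hθ
    have hx' : x ∈ Icc (t₀ - ε) (t₀ + ε) := by
      rw [mem_ball, Real.dist_eq] at hx
      have := abs_lt.1 hx
      constructor <;> linarith [this.1, this.2]
    exact hM (x, θ) ⟨hx', hθ'⟩
  · exact intervalIntegrable_const
  · refine ae_of_all _ fun θ _ x hx => hd x θ (hlt x hx)


def Qi (t : ℝ) : ℝ := ∫ θ in (0:ℝ)..(2 * π), (V u t θ) ^ 2
def Ci (t : ℝ) : ℝ := ∫ θ in (0:ℝ)..(2 * π), V u t θ * Vt u t θ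
def Ai (t : ℝ) : ℝ := ∫ θ in (0:ℝ)..(2 * π), Vt u t θ * Vt u t θ
def Bi (t : ℝ) : ℝ := ∫ θ in (0:ℝ)..(2 * π), Vh u t θ * Vh u t θ
def Ei (t : ℝ) : ℝ := ∫ θ in (0:ℝ)..(2 * π), (Vt u t θ * Vt u t θ + V u t θ * Vtt u t θ)

include hR hu in
lemma hQi {t : ℝ} (ht : t < Real.log R) : HasDerivAt (Qi u) (2 * Ci u t) t := by
  have h := param_deriv (F := fun t θ => (V u t θ) ^ 2)
    (F' := fun t θ => 2 * (V u t θ * Vt u t θ))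
    ((contV u hR hu).pow 2)
    (continuousOn_const.mul ((contV u hR hu).mul (contVt u hR hu)))
    (fun t θ ht => by
      have h2 := (hV_t u hR hu ht θ).pow 2
      norm_num [mul_assoc] at h2
      exact h2) ht
  rw [intervalIntegral.integral_const_mul] at h
  exact h

include hR hu in
lemma hCi {t : ℝ} (ht : t < Real.log R) : HasDerivAt (Ci u) (Ei u t) t :=
  param_deriv (F := fun t θ => V u t θ * Vt u t θ)
    (F' := fun t θ => Vt u t θ * Vt u t θ + V u t θ * Vtt u t θ)
    ((contV u hR hu).mul (contVt u hR hu))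
    (((contVt u hR hu).mul (contVt u hR hu)).add ((contV u hR hu).mul (contVtt u hR hu)))
    (fun t θ ht => (hV_t u hR hu ht θ).mul (hVt_t u hR hu ht θ)) ht

include hR hu in
lemma byparts
    (hharm : ∀ p ∈ Metric.ball (0 : ℝ × ℝ) R,
      deriv (fun s => deriv (fun t => u (t, p.2)) s) p.1 +
        deriv (fun s => deriv (fun t => u (p.1, t)) s) p.2 = 0)
    {t : ℝ} (ht : t < Real.log R) : Ei u t = Ai u t + Bi u t := by
  have cV : Continuous (V u t) := cont_slice (contV u hR hu) ht
  have cVt : Continuous (Vt u t) := cont_slice (contVt u hR hu) ht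
  have cVh : Continuous (Vh u t) := cont_slice (contVh u hR hu) ht
  have cVtt : Continuous (Vtt u t) := cont_slice (contVtt u hR hu) ht
  have cVhh : Continuous (Vhh u t) := cont_slice (contVhh u hR hu) ht
  -- FTC for the periodic function V * Vh
  have hFTC : (∫ θ in (0:ℝ)..(2 * π),
      (Vh u t θ * Vh u t θ + V u t θ * Vhh u t θ)) = 0 := by
    have hder : ∀ θ ∈ uIcc (0:ℝ) (2 * π),
        HasDerivAt (fun φ => V u t φ * Vh u t φ)
          (Vh u t θ * Vh u t θ + V u t θ * Vhh u t θ) θ :=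
      fun θ _ => (hV_h u hR hu ht θ).mul (hVh_h u hR hu ht θ)
    have hint : IntervalIntegrable
        (fun θ => Vh u t θ * Vh u t θ + V u t θ * Vhh u t θ) volume 0 (2 * π) :=
      ((cVh.mul cVh).add (cV.mul cVhh)).intervalIntegrable 0 (2 * π)
    rw [intervalIntegral.integral_eq_sub_of_hasDerivAt hder hint]
    have hper : pt t (2 * π) = pt t 0 := by
      simp [pt, Real.cos_two_pi, Real.sin_two_pi]
    simp [V, Vh, hper]
  have hBsplit : (∫ θ in (0:ℝ)..(2 * π),
      (Vh u t θ * Vh u t θ + V u t θ * Vhh u t θ))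
      = Bi u t + ∫ θ in (0:ℝ)..(2 * π), V u t θ * Vhh u t θ :=
    intervalIntegral.integral_add ((cVh.mul cVh).intervalIntegrable _ _)
      ((cV.mul cVhh).intervalIntegrable _ _)
  have hVhh0 : (∫ θ in (0:ℝ)..(2 * π), V u t θ * Vhh u t θ) = -Bi u t := by
    rw [hBsplit] at hFTC; linarith
  have hEsplit : Ei u t = Ai u t + ∫ θ in (0:ℝ)..(2 * π), V u t θ * Vtt u t θ :=
    intervalIntegral.integral_add ((cVt.mul cVt).intervalIntegrable _ _)
      ((cV.mul cVtt).intervalIntegrable _ _)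
  have hpoint : (fun θ => V u t θ * Vtt u t θ) = fun θ => -(V u t θ * Vhh u t θ) := by
    funext θ
    have h := VttVhh u hR hu hharm ht θ
    have h2 : Vtt u t θ = -Vhh u t θ := by linarith
    rw [h2]; ring
  rw [hEsplit, hpoint, intervalIntegral.integral_neg, hVhh0]
  ring

include hR hu in
lemma cauchy_schwarz {t : ℝ} (ht : t < Real.log R) :
    Ci u t ^ 2 ≤ Ai u t * Qi u t := by
  have cV : Continuous (V u t) := cont_slice (contV u hR hu) ht
  have cVt : Continuous (Vt u t) := cont_slice (contVt u hR hu) ht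
  have h2π : (0:ℝ) ≤ 2 * π := by positivity
  have key : ∀ x : ℝ, 0 ≤ Ai u t * (x * x) + (2 * Ci u t) * x + Qi u t := by
    intro x
    have h0 : 0 ≤ ∫ θ in (0:ℝ)..(2 * π), (x * Vt u t θ + V u t θ) ^ 2 :=
      intervalIntegral.integral_nonneg h2π (fun θ _ => sq_nonneg _)
    have hsplit : (∫ θ in (0:ℝ)..(2 * π), (x * Vt u t θ + V u t θ) ^ 2)
        = Ai u t * (x * x) + (2 * Ci u t) * x + Qi u t := by
      have hpoint : (fun θ => (x * Vt u t θ + V u t θ) ^ 2)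
          = fun θ => (x * x) * (Vt u t θ * Vt u t θ)
            + (x * (2 * (V u t θ * Vt u t θ)) + (V u t θ) ^ 2) := by
        funext θ; ring
      rw [hpoint, intervalIntegral.integral_add, intervalIntegral.integral_add,
        intervalIntegral.integral_const_mul, intervalIntegral.integral_const_mul,
        intervalIntegral.integral_const_mul]
      · show x * x * Ai u t + (x * (2 * Ci u t) + Qi u t) = _
        ring
      · exact (continuous_const.mul (continuous_const.mul (cV.mul cVt))).intervalIntegrable _ _
      · exact (cV.pow 2).intervalIntegrable _ _
      · exact (continuous_const.mul (cVt.mul cVt)).intervalIntegrable _ _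
      · exact ((continuous_const.mul (continuous_const.mul (cV.mul cVt))).add
          ((cV.pow 2))).intervalIntegrable _ _
    linarith [hsplit ▸ h0]
  have hdisc := discrim_le_zero key
  rw [discrim] at hdisc
  nlinarith [hdisc]


/-- The conjugate-holomorphic derivative `u_x - i u_y`. -/
def wf : ℂ → ℂ := fun z =>
  ((g u ((Complex.equivRealProdCLM : ℂ →L[ℝ] ℝ × ℝ) z) ((1:ℝ), (0:ℝ)) : ℝ) : ℂ)
    + (g u ((Complex.equivRealProdCLM : ℂ →L[ℝ] ℝ × ℝ) z) ((0:ℝ), (1:ℝ))) • (-Complex.I)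

lemma em_mem {z : ℂ} (hz : z ∈ Metric.ball (0 : ℂ) R) :
    (Complex.equivRealProdCLM : ℂ →L[ℝ] ℝ × ℝ) z ∈ Metric.ball (0 : ℝ × ℝ) R := by
  rw [mem_ball_zero_iff] at hz ⊢
  have h1 : ‖z.re‖ ≤ ‖z‖ := Complex.abs_re_le_norm z
  have h2 : ‖z.im‖ ≤ ‖z‖ := Complex.abs_im_le_norm z
  have : ‖((Complex.equivRealProdCLM : ℂ →L[ℝ] ℝ × ℝ) z)‖ = max ‖z.re‖ ‖z.im‖ := rfl
  rw [this]
  exact lt_of_le_of_lt (max_le h1 h2) hz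

include hu in
lemma wf_hasDeriv
    (hharm : ∀ p ∈ Metric.ball (0 : ℝ × ℝ) R,
      deriv (fun s => deriv (fun t => u (t, p.2)) s) p.1 +
        deriv (fun s => deriv (fun t => u (p.1, t)) s) p.2 = 0)
    {z : ℂ} (hz : z ∈ Metric.ball (0 : ℂ) R) :
    DifferentiableAt ℂ (wf u) z := by
  set E : ℂ →L[ℝ] ℝ × ℝ := (Complex.equivRealProdCLM : ℂ →L[ℝ] ℝ × ℝ) with hE
  set p : ℝ × ℝ := E z with hp
  have hpball : p ∈ Metric.ball (0 : ℝ × ℝ) R := em_mem hz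
  set A1 : ((ℝ × ℝ) →L[ℝ] ℝ) →L[ℝ] ℝ := ContinuousLinearMap.apply ℝ ℝ (((1:ℝ), (0:ℝ))) with hA1
  set A2 : ((ℝ × ℝ) →L[ℝ] ℝ) →L[ℝ] ℝ := ContinuousLinearMap.apply ℝ ℝ (((0:ℝ), (1:ℝ))) with hA2
  have hgem : HasFDerivAt (fun w : ℂ => g u (E w)) ((g2 u p).comp E) z :=
    (hasFDerivAt_g u hu hpball).comp z E.hasFDerivAt
  have h1 : HasFDerivAt (fun w : ℂ => g u (E w) ((1:ℝ), (0:ℝ)))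
      (A1.comp ((g2 u p).comp E)) z := (A1.hasFDerivAt).comp z hgem
  have h2 : HasFDerivAt (fun w : ℂ => g u (E w) ((0:ℝ), (1:ℝ)))
      (A2.comp ((g2 u p).comp E)) z := (A2.hasFDerivAt).comp z hgem
  have h1' : HasFDerivAt (fun w : ℂ => ((g u (E w) ((1:ℝ), (0:ℝ)) : ℝ) : ℂ))
      (Complex.ofRealCLM.comp (A1.comp ((g2 u p).comp E))) z :=
    Complex.ofRealCLM.hasFDerivAt.comp z h1
  have h2' : HasFDerivAt (fun w : ℂ => (g u (E w) ((0:ℝ), (1:ℝ))) • (-Complex.I))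
      ((A2.comp ((g2 u p).comp E)).smulRight (-Complex.I)) z := h2.smul_const (-Complex.I)
  have hL : HasFDerivAt (wf u)
      (Complex.ofRealCLM.comp (A1.comp ((g2 u p).comp E))
        + (A2.comp ((g2 u p).comp E)).smulRight (-Complex.I)) z := h1'.add h2'
  set L := Complex.ofRealCLM.comp (A1.comp ((g2 u p).comp E))
        + (A2.comp ((g2 u p).comp E)).smulRight (-Complex.I) with hLdef
  set c : ℂ := ((g2 u p (1, 0) (1, 0) : ℝ) : ℂ)
      + (g2 u p (1, 0) (0, 1) : ℝ) • (-Complex.I) with hc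
  have hA21 : g2 u p (0, 1) (1, 0) = g2 u p (1, 0) (0, 1) := clairaut u hu hpball _ _
  have hA22 : g2 u p (0, 1) (0, 1) = -g2 u p (1, 0) (1, 0) := by
    have := lap u hu hharm hpball; linarith
  have hLh : ∀ h : ℂ, L h = h * c := by
    intro h
    have hEh : E h = (h.re, h.im) := rfl
    have hexp : g2 u p (E h) = g2 u p ((h.re : ℝ), (h.im : ℝ)) := by rw [hEh]
    simp only [hLdef, ContinuousLinearMap.add_apply, ContinuousLinearMap.comp_apply,
      ContinuousLinearMap.smulRight_apply, Complex.ofRealCLM_apply,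
      hA1, hA2, ContinuousLinearMap.apply_apply]
    rw [hEh]
    have e1 : g2 u p (h.re, h.im) ((1:ℝ), (0:ℝ))
        = h.re * g2 u p (1, 0) (1, 0) + h.im * g2 u p (0, 1) (1, 0) := by
      rw [bilin_expand]; simp
    have e2 : g2 u p (h.re, h.im) ((0:ℝ), (1:ℝ))
        = h.re * g2 u p (1, 0) (0, 1) + h.im * g2 u p (0, 1) (0, 1) := by
      rw [bilin_expand]; simp
    rw [e1, e2, hA21, hA22, hc]
    apply Complex.ext <;>
      simp [Complex.real_smul, Complex.mul_re, Complex.mul_im] <;> ring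
  have hder : HasDerivAt (wf u) c z := by
    rw [hasDerivAt_iff_isLittleO]
    have h2 := hL.isLittleO
    simpa only [smul_eq_mul, hLh] using h2
  exact hder.differentiableAt

include hR hu in
lemma contour
    (hharm : ∀ p ∈ Metric.ball (0 : ℝ × ℝ) R,
      deriv (fun s => deriv (fun t => u (t, p.2)) s) p.1 +
        deriv (fun s => deriv (fun t => u (p.1, t)) s) p.2 = 0)
    {t : ℝ} (ht : t < Real.log R) : Ai u t = Bi u t := by
  have hrp : (0:ℝ) < Real.exp t := Real.exp_pos t
  have hrR : Real.exp t < R := by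
    calc Real.exp t < Real.exp (Real.log R) := Real.exp_lt_exp.2 ht
    _ = R := Real.exp_log hR
  set r : ℝ := Real.exp t with hr
  -- the complex integrand
  set F : ℝ → ℂ := fun θ => (circleMap 0 r θ * Complex.I)
    * (circleMap 0 r θ * wf u (circleMap 0 r θ) ^ 2) with hF
  have habs : ∀ θ, circleMap 0 r θ ∈ Metric.ball (0:ℂ) R := by
    intro θ
    rw [mem_ball_zero_iff, norm_circleMap_zero, abs_of_pos hrp]
    exact hrR
  have hwcont : Continuous fun θ => wf u (circleMap 0 r θ) := by
    rw [continuous_iff_continuousAt]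
    intro θ
    exact ((wf_hasDeriv u hu hharm (habs θ)).continuousAt).comp
      (continuous_circleMap 0 r).continuousAt
  have hFcont : Continuous F := by
    apply Continuous.mul
    · exact (continuous_circleMap 0 r).mul continuous_const
    · exact (continuous_circleMap 0 r).mul (hwcont.pow 2)
  -- Cauchy's theorem
  have hz0 : (∮ z in C(0, r), z * wf u z ^ 2) = 0 := by
    apply circleIntegral_eq_zero_of_differentiable_on_off_countable hrp.le
      Set.countable_empty
    · intro z hz
      have hzR : z ∈ Metric.ball (0:ℂ) R := by
        rw [mem_closedBall_zero_iff] at hz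
        rw [mem_ball_zero_iff]
        exact lt_of_le_of_lt hz hrR
      exact (differentiableAt_fun_id.mul
        (((wf_hasDeriv u hu hharm hzR)).pow 2)).continuousAt.continuousWithinAt
    · intro z hz
      have hzR : z ∈ Metric.ball (0:ℂ) R :=
        mem_ball_zero_iff.2 (lt_trans (mem_ball_zero_iff.1 hz.1) hrR)
      exact differentiableAt_fun_id.mul ((wf_hasDeriv u hu hharm hzR).pow 2)
  have hFint : (∫ θ in (0:ℝ)..(2 * π), F θ) = 0 := by
    rw [← hz0]
    simp only [circleIntegral, deriv_circleMap, smul_eq_mul, hF]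
  -- pointwise imaginary part
  have hpoint : ∀ θ, (F θ).im = Vt u t θ * Vt u t θ - Vh u t θ * Vh u t θ := by
    intro θ
    have hre : (circleMap 0 r θ).re = (pt t θ).1 := by
      simp [circleMap, pt, hr, Complex.exp_ofReal_mul_I_re, Complex.exp_ofReal_re]
    have him : (circleMap 0 r θ).im = (pt t θ).2 := by
      simp [circleMap, pt, hr, Complex.exp_ofReal_mul_I_im, Complex.exp_ofReal_re]
    have hE : (Complex.equivRealProdCLM : ℂ →L[ℝ] ℝ × ℝ) (circleMap 0 r θ) = pt t θ := by
      have : (Complex.equivRealProdCLM : ℂ →L[ℝ] ℝ × ℝ) (circleMap 0 r θ)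
          = ((circleMap 0 r θ).re, (circleMap 0 r θ).im) := rfl
      rw [this, hre, him]
    have hVt : Vt u t θ = (pt t θ).1 * g u (pt t θ) (1, 0) + (pt t θ).2 * g u (pt t θ) (0, 1) := by
      rw [Vt, lin_expand]
    have hVh : Vh u t θ = -(pt t θ).2 * g u (pt t θ) (1, 0)
        + (pt t θ).1 * g u (pt t θ) (0, 1) := by
      rw [Vh, lin_expand]; simp [rot]
    rw [hF]
    simp only [wf, hE]
    rw [hVt, hVh]
    set a := g u (pt t θ) (1, 0)
    set b := g u (pt t θ) (0, 1)
    set x := (pt t θ).1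
    set y := (pt t θ).2
    have hz : circleMap 0 r θ = Complex.I * y + x := by
      apply Complex.ext <;> simp [hre, him]
    rw [hz]
    simp only [Complex.real_smul, pow_two]
    simp [Complex.mul_im, Complex.mul_re]
    ring
  -- put it together
  have h2π : (0:ℝ) ≤ 2 * π := by positivity
  have hsub : Ai u t - Bi u t
      = ∫ θ in (0:ℝ)..(2 * π), (Vt u t θ * Vt u t θ - Vh u t θ * Vh u t θ) := by
    have cVt : Continuous (Vt u t) := cont_slice (contVt u hR hu) ht
    have cVh : Continuous (Vh u t) := cont_slice (contVh u hR hu) ht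
    unfold Ai Bi
    exact (intervalIntegral.integral_sub ((cVt.mul cVt).intervalIntegrable _ _)
      ((cVh.mul cVh).intervalIntegrable _ _)).symm
  have him0 : (∫ θ in (0:ℝ)..(2 * π), (Vt u t θ * Vt u t θ - Vh u t θ * Vh u t θ)) = 0 := by
    have e1 : (∫ θ in (0:ℝ)..(2 * π), (Vt u t θ * Vt u t θ - Vh u t θ * Vh u t θ))
        = ∫ θ in (0:ℝ)..(2 * π), (F θ).im := by
      apply intervalIntegral.integral_congr
      intro θ _
      simpa using (hpoint θ).symm
    rw [e1]
    rw [intervalIntegral.integral_of_le h2π] at hFint ⊢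
    have hint : Integrable F (volume.restrict (Ioc (0:ℝ) (2 * π))) :=
      ((hFcont.intervalIntegrable 0 (2 * π)).1)
    have him := _root_.integral_im hint
    rw [hFint] at him
    simpa using him
  linarith [hsub ▸ him0, hsub]

lemma emap_circle (t θ : ℝ) :
    (Complex.equivRealProdCLM : ℂ →L[ℝ] ℝ × ℝ) (circleMap 0 (Real.exp t) θ) = pt t θ := by
  have hre : (circleMap 0 (Real.exp t) θ).re = (pt t θ).1 := by
    simp [circleMap, pt, Complex.exp_ofReal_mul_I_re, Complex.exp_ofReal_re]
  have him : (circleMap 0 (Real.exp t) θ).im = (pt t θ).2 := by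
    simp [circleMap, pt, Complex.exp_ofReal_mul_I_im, Complex.exp_ofReal_re]
  have : (Complex.equivRealProdCLM : ℂ →L[ℝ] ℝ × ℝ) (circleMap 0 (Real.exp t) θ)
      = ((circleMap 0 (Real.exp t) θ).re, (circleMap 0 (Real.exp t) θ).im) := rfl
  rw [this, hre, him]

/-- a continuous function whose square has vanishing integral vanishes on the interior -/
lemma zero_on_Ioo {f : ℝ → ℝ} (hc : Continuous f)
    (hint : (∫ θ in (0:ℝ)..(2 * π), f θ * f θ) = 0) :
    ∀ θ ∈ Ioo (0:ℝ) (2 * π), f θ = 0 := by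
  intro θ₀ hθ₀
  by_contra hne
  have hpos : 0 < ∫ θ in (0:ℝ)..(2 * π), f θ * f θ := by
    rw [intervalIntegral.integral_pos_iff_support_of_nonneg_ae
      (ae_of_all _ fun x => mul_self_nonneg (f x))
      ((hc.mul hc).intervalIntegrable _ _)]
    refine ⟨by positivity, ?_⟩
    have hopen : IsOpen {θ : ℝ | f θ ≠ 0} := isOpen_compl_singleton.preimage hc
    have hpos2 : 0 < volume ({θ : ℝ | f θ ≠ 0} ∩ Ioo 0 (2 * π)) :=
      (hopen.inter isOpen_Ioo).measure_pos volume ⟨θ₀, hne, hθ₀⟩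
    refine lt_of_lt_of_le hpos2 (measure_mono ?_)
    rintro x ⟨hx1, hx2⟩
    exact ⟨by simpa [Function.mem_support, mul_self_eq_zero] using hx1,
      Ioo_subset_Ioc_self hx2⟩
  exact absurd hint hpos.ne'

include hR hu in
theorem main
    (hharm : ∀ p ∈ Metric.ball (0 : ℝ × ℝ) R,
      deriv (fun s => deriv (fun t => u (t, p.2)) s) p.1 +
        deriv (fun s => deriv (fun t => u (p.1, t)) s) p.2 = 0) :
    ConvexOn ℝ (Set.Iio (Real.log R))
      (fun t => Real.log (∫ θ in (0:ℝ)..(2 * Real.pi),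
        (u (Real.exp t * Real.cos θ, Real.exp t * Real.sin θ)) ^ 2 * Real.exp t)) := by
  have h2π : (0:ℝ) ≤ 2 * π := by positivity
  have hfun : (fun t => Real.log (∫ θ in (0:ℝ)..(2 * Real.pi),
      (u (Real.exp t * Real.cos θ, Real.exp t * Real.sin θ)) ^ 2 * Real.exp t))
      = fun t => Real.log (Qi u t * Real.exp t) := by
    funext t
    rw [intervalIntegral.integral_mul_const]
    rfl
  rw [hfun]
  by_cases hz : ∀ t ∈ Iio (Real.log R), Qi u t ≠ 0
  · -- positive case
    have hQpos : ∀ t ∈ Iio (Real.log R), 0 < Qi u t := by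
      intro t ht
      rcases lt_or_eq_of_le (intervalIntegral.integral_nonneg h2π
        (fun θ _ => sq_nonneg (V u t θ))) with h | h
      · exact h
      · exact absurd h.symm (hz t ht)
    set f := fun t => Real.log (Qi u t * Real.exp t) with hfdef
    have hf : ∀ t ∈ Iio (Real.log R), HasDerivAt f (2 * Ci u t / Qi u t + 1) t := by
      intro t ht
      have hq : HasDerivAt (fun t => Qi u t * Real.exp t)
          (2 * Ci u t * Real.exp t + Qi u t * Real.exp t) t :=
        (hQi u hR hu ht).mul (Real.hasDerivAt_exp t)
      have hne : Qi u t * Real.exp t ≠ 0 :=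
        ne_of_gt (mul_pos (hQpos t ht) (Real.exp_pos t))
      have h := hq.log hne
      convert h using 1
      have h1 := (hQpos t ht).ne'
      have h2 := (Real.exp_pos t).ne'
      field_simp
    have hf1 : ∀ t ∈ Iio (Real.log R),
        HasDerivAt (fun t => 2 * Ci u t / Qi u t + 1)
          ((2 * Ei u t * Qi u t - 2 * Ci u t * (2 * Ci u t)) / Qi u t ^ 2) t := by
      intro t ht
      have hnum : HasDerivAt (fun t => 2 * Ci u t) (2 * Ei u t) t :=
        (hCi u hR hu ht).const_mul 2
      exact (hnum.div (hQi u hR hu ht) (hQpos t ht).ne').add_const 1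
    have hnonneg : ∀ t ∈ Iio (Real.log R),
        0 ≤ (2 * Ei u t * Qi u t - 2 * Ci u t * (2 * Ci u t)) / Qi u t ^ 2 := by
      intro t ht
      apply div_nonneg _ (sq_nonneg _)
      have hE : Ei u t = Ai u t + Bi u t := byparts u hR hu hharm ht
      have hAB : Ai u t = Bi u t := contour u hR hu hharm ht
      have hcs := cauchy_schwarz u hR hu ht
      rw [hE, ← hAB]
      nlinarith [hcs]
    apply convexOn_of_deriv2_nonneg (convex_Iio _)
    · intro t ht
      exact (hf t ht).continuousAt.continuousWithinAt
    · rw [interior_Iio]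
      intro t ht
      exact (hf t ht).differentiableAt.differentiableWithinAt
    · rw [interior_Iio]
      intro t ht
      have hev : deriv f =ᶠ[𝓝 t] (fun s => 2 * Ci u s / Qi u s + 1) := by
        filter_upwards [Iio_mem_nhds ht] with s hs
        exact (hf s hs).deriv
      exact (hev.differentiableAt_iff.2 (hf1 t ht).differentiableAt).differentiableWithinAt
    · rw [interior_Iio]
      intro t ht
      have hev : deriv f =ᶠ[𝓝 t] (fun s => 2 * Ci u s / Qi u s + 1) := by
        filter_upwards [Iio_mem_nhds ht] with s hs
        exact (hf s hs).deriv
      have h2 : deriv^[2] f t = deriv (deriv f) t := by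
        rw [Function.iterate_succ_apply', Function.iterate_one]
      rw [h2, hev.deriv_eq, (hf1 t ht).deriv]
      exact hnonneg t ht
  · -- zero case : u vanishes identically
    push_neg at hz
    obtain ⟨t₀, ht₀, hQ0⟩ := hz
    have cV : Continuous (V u t₀) := cont_slice (contV u hR hu) ht₀
    have cVt : Continuous (Vt u t₀) := cont_slice (contVt u hR hu) ht₀
    have cVh : Continuous (Vh u t₀) := cont_slice (contVh u hR hu) ht₀
    -- V vanishes on the circle
    have hV0 : ∀ θ ∈ Ioo (0:ℝ) (2 * π), V u t₀ θ = 0 := by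
      apply zero_on_Ioo cV
      have heq : (∫ θ in (0:ℝ)..(2 * π), V u t₀ θ * V u t₀ θ)
          = ∫ θ in (0:ℝ)..(2 * π), (V u t₀ θ) ^ 2 := by
        apply intervalIntegral.integral_congr
        intro θ _
        ring
      rw [heq]
      exact hQ0
    -- Vh vanishes on the circle
    have hVh0 : ∀ θ ∈ Ioo (0:ℝ) (2 * π), Vh u t₀ θ = 0 := by
      intro θ hθ
      have hev : (fun φ => V u t₀ φ) =ᶠ[𝓝 θ] (fun _ => (0:ℝ)) := by
        filter_upwards [isOpen_Ioo.mem_nhds hθ] with φ hφ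
        exact hV0 φ hφ
      have hzero : HasDerivAt (fun φ => V u t₀ φ) 0 θ :=
        (hasDerivAt_const θ (0:ℝ)).congr_of_eventuallyEq hev
      exact (hV_h u hR hu ht₀ θ).unique hzero
    -- hence on the closed interval by continuity
    have hVh0' : ∀ θ ∈ Icc (0:ℝ) (2 * π), Vh u t₀ θ = 0 := by
      have hclosed : IsClosed {θ : ℝ | Vh u t₀ θ = 0} :=
        isClosed_eq cVh continuous_const
      have hsub : Icc (0:ℝ) (2 * π) ⊆ {θ : ℝ | Vh u t₀ θ = 0} := by
        rw [← closure_Ioo (by positivity : (0:ℝ) ≠ 2 * π)]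
        exact closure_minimal (fun θ hθ => hV0 θ hθ ▸ hVh0 θ hθ) hclosed
      exact fun θ hθ => hsub hθ
    have hB0 : Bi u t₀ = 0 := by
      have : Bi u t₀ = ∫ θ in (0:ℝ)..(2 * π), (0:ℝ) := by
        apply intervalIntegral.integral_congr
        intro θ hθ
        rw [uIcc_of_le h2π] at hθ
        simp [hVh0' θ hθ]
      simpa using this
    have hA0 : Ai u t₀ = 0 := (contour u hR hu hharm ht₀).trans hB0
    have hVt0 : ∀ θ ∈ Ioo (0:ℝ) (2 * π), Vt u t₀ θ = 0 := zero_on_Ioo cVt hA0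
    -- gradient vanishes on the circle
    have hgrad0 : ∀ θ ∈ Ioo (0:ℝ) (2 * π),
        g u (pt t₀ θ) (1, 0) = 0 ∧ g u (pt t₀ θ) (0, 1) = 0 := by
      intro θ hθ
      set x := (pt t₀ θ).1 with hx
      set y := (pt t₀ θ).2 with hy
      set a := g u (pt t₀ θ) (1, 0) with ha
      set b := g u (pt t₀ θ) (0, 1) with hb
      have h1 : x * a + y * b = 0 := by
        have := hVt0 θ hθ
        rwa [Vt, lin_expand] at this
      have h2 : -y * a + x * b = 0 := by
        have := hVh0 θ hθ
        rw [Vh, lin_expand] at this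
        simpa [rot] using this
      have hxy : x ^ 2 + y ^ 2 = Real.exp t₀ ^ 2 := by
        simp only [hx, hy, pt]
        nlinarith [Real.sin_sq_add_cos_sq θ]
      have hxe : (0:ℝ) < x ^ 2 + y ^ 2 := by
        rw [hxy]; positivity
      constructor
      · have : (x ^ 2 + y ^ 2) * a = 0 := by linear_combination x * h1 - y * h2
        exact (mul_eq_zero.1 this).resolve_left hxe.ne'
      · have : (x ^ 2 + y ^ 2) * b = 0 := by linear_combination y * h1 + x * h2
        exact (mul_eq_zero.1 this).resolve_left hxe.ne'
    have hrt0R : Real.exp t₀ < R := by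
      calc Real.exp t₀ < Real.exp (Real.log R) := Real.exp_lt_exp.2 ht₀
      _ = R := Real.exp_log hR
    -- wf vanishes along a sequence approaching the real point exp t₀
    have hwcircle : ∀ θ ∈ Ioo (0:ℝ) (2 * π), wf u (circleMap 0 (Real.exp t₀) θ) = 0 := by
      intro θ hθ
      obtain ⟨h1, h2⟩ := hgrad0 θ hθ
      rw [wf, emap_circle, h1, h2]
      simp
    -- identity theorem
    have hwball : ∀ z ∈ Metric.ball (0:ℂ) R, wf u z = 0 := by
      have hana : AnalyticOnNhd ℂ (wf u) (Metric.ball (0:ℂ) R) :=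
        DifferentiableOn.analyticOnNhd
          (fun z hz => (wf_hasDeriv u hu hharm hz).differentiableWithinAt) isOpen_ball
      have hconn : IsPreconnected (Metric.ball (0:ℂ) R) :=
        (convex_ball (0:ℂ) R).isPreconnected
      have hz₀ : ((Real.exp t₀ : ℝ) : ℂ) ∈ Metric.ball (0:ℂ) R := by
        rw [mem_ball_zero_iff, Complex.norm_real, Real.norm_eq_abs,
          abs_of_pos (Real.exp_pos t₀)]
        exact hrt0R
      have hfreq : ∃ᶠ z in 𝓝[≠] ((Real.exp t₀ : ℝ) : ℂ), wf u z = 0 := by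
        set seq : ℕ → ℂ := fun n => circleMap 0 (Real.exp t₀) (1 / (n + 1)) with hseq
        have hmem : ∀ n : ℕ, (1 : ℝ) / (n + 1) ∈ Ioo (0:ℝ) (2 * π) := by
          intro n
          constructor
          · positivity
          · have h1 : (1:ℝ) / (n + 1) ≤ 1 := by
              rw [div_le_one (by positivity)]
              simp
            nlinarith [Real.pi_gt_three]
        have htendθ : Tendsto (fun n : ℕ => (1:ℝ) / (n + 1)) atTop (𝓝 0) :=
          tendsto_one_div_add_atTop_nhds_zero_nat
        have htend0 : Tendsto seq atTop (𝓝 ((Real.exp t₀ : ℝ) : ℂ)) := by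
          have hc : Tendsto (circleMap 0 (Real.exp t₀)) (𝓝 0)
              (𝓝 (circleMap 0 (Real.exp t₀) 0)) :=
            (continuous_circleMap 0 (Real.exp t₀)).continuousAt
          have : circleMap 0 (Real.exp t₀) 0 = ((Real.exp t₀ : ℝ) : ℂ) := by
            simp [circleMap]
          rw [this] at hc
          exact hc.comp htendθ
        have hne : ∀ n : ℕ, seq n ≠ ((Real.exp t₀ : ℝ) : ℂ) := by
          intro n h
          have him : (seq n).im = Real.exp t₀ * Real.sin (1 / (n + 1)) :=
            congrArg Prod.snd (emap_circle t₀ (1 / (n + 1)))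
          have hsinpos : 0 < Real.sin (1 / (n + 1)) := by
            apply Real.sin_pos_of_pos_of_lt_pi (hmem n).1
            have h1 : (1:ℝ) / (n + 1) ≤ 1 := by
              rw [div_le_one (by positivity)]
              simp
            nlinarith [Real.pi_gt_three]
          have : (seq n).im > 0 := by
            rw [him]
            exact mul_pos (Real.exp_pos t₀) hsinpos
          rw [h] at this
          simp at this
        have htend : Tendsto seq atTop (𝓝[≠] ((Real.exp t₀ : ℝ) : ℂ)) := by
          rw [tendsto_nhdsWithin_iff]
          exact ⟨htend0, Eventually.of_forall fun n => hne n⟩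
        exact htend.frequently (Eventually.of_forall
          (fun n => hwcircle _ (hmem n))).frequently
      exact hana.eqOn_zero_of_preconnected_of_frequently_eq_zero hconn hz₀ hfreq
    -- the preimage convex set
    set ι : (ℝ × ℝ) →L[ℝ] ℂ := (Complex.equivRealProdCLM.symm : (ℝ × ℝ) →L[ℝ] ℂ) with hι
    set S : Set (ℝ × ℝ) := ι ⁻¹' (Metric.ball (0:ℂ) R) with hS
    have hSconv : Convex ℝ S := (convex_ball (0:ℂ) R).linear_preimage (ι : (ℝ × ℝ) →ₗ[ℝ] ℂ)
    have hSball : S ⊆ Metric.ball (0 : ℝ × ℝ) R := by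
      intro p hp
      rw [hS, mem_preimage, mem_ball_zero_iff] at hp
      rw [mem_ball_zero_iff]
      have hre : (ι p).re = p.1 := by
        simp [hι, Complex.equivRealProdCLM_symm_apply]
      have him : (ι p).im = p.2 := by
        simp [hι, Complex.equivRealProdCLM_symm_apply]
      have h1 : |p.1| ≤ ‖ι p‖ := hre ▸ Complex.abs_re_le_norm (ι p)
      have h2 : |p.2| ≤ ‖ι p‖ := him ▸ Complex.abs_im_le_norm (ι p)
      calc ‖p‖ = max |p.1| |p.2| := rfl
      _ ≤ ‖ι p‖ := max_le h1 h2
      _ < R := hp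
    -- gradient vanishes on S
    have hg0 : ∀ p ∈ S, g u p = 0 := by
      intro p hp
      have hw : wf u (ι p) = 0 := hwball _ hp
      have hEιp : (Complex.equivRealProdCLM : ℂ →L[ℝ] ℝ × ℝ) (ι p) = p := by
        simp [hι]
      rw [wf, hEιp] at hw
      rw [Complex.ext_iff] at hw
      have ha : g u p (1, 0) = 0 := by
        have := hw.1
        simpa [Complex.real_smul] using this
      have hb : g u p (0, 1) = 0 := by
        have := hw.2
        simpa [Complex.real_smul] using this
      apply ContinuousLinearMap.ext
      intro v
      rw [lin_expand, ha, hb]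
      simp
    -- u is constant (hence 0) on S
    have hu0S : ∀ p ∈ S, ∀ q ∈ S, u p = u q := by
      intro p hp q hq
      have hdiff : ∀ x ∈ S, DifferentiableAt ℝ u x := fun x hx =>
        (hu.differentiableOn (by norm_num)).differentiableAt
          (isOpen_ball.mem_nhds (hSball hx))
      have hbound : ∀ x ∈ S, ‖fderiv ℝ u x‖ ≤ 0 := by
        intro x hx
        have : fderiv ℝ u x = 0 := hg0 x hx
        rw [this]; simp
      have := hSconv.norm_image_sub_le_of_norm_fderiv_le hdiff hbound hq hp
      simp only [zero_mul] at this
      have h0 : ‖u p - u q‖ ≤ 0 := this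
      have := norm_nonneg (u p - u q)
      have : u p - u q = 0 := by
        rw [← norm_eq_zero]; linarith
      linarith [this]
    -- circle points are in S
    have hptS : ∀ t < Real.log R, ∀ θ, pt t θ ∈ S := by
      intro t ht θ
      rw [hS, mem_preimage]
      have : ι (pt t θ) = circleMap 0 (Real.exp t) θ := by
        have h1 : (ι (pt t θ)).re = (circleMap 0 (Real.exp t) θ).re := by
          have := congrArg Prod.fst (emap_circle t θ)
          simp only [hι, Complex.equivRealProdCLM_symm_apply]
          simpa using this.symm
        have h2 : (ι (pt t θ)).im = (circleMap 0 (Real.exp t) θ).im := by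
          have := congrArg Prod.snd (emap_circle t θ)
          simp only [hι, Complex.equivRealProdCLM_symm_apply]
          simpa using this.symm
        exact Complex.ext h1 h2
      rw [this, mem_ball_zero_iff, norm_circleMap_zero,
        abs_of_pos (Real.exp_pos t)]
      calc Real.exp t < Real.exp (Real.log R) := Real.exp_lt_exp.2 ht
      _ = R := Real.exp_log hR
    -- u vanishes on all relevant circle points
    have hπIoo : π ∈ Ioo (0:ℝ) (2 * π) := ⟨Real.pi_pos, by nlinarith [Real.pi_pos]⟩
    have hp₀ : u (pt t₀ π) = 0 := hV0 π hπIoo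
    have hu0 : ∀ t < Real.log R, ∀ θ, u (pt t θ) = 0 := by
      intro t ht θ
      rw [hu0S (pt t θ) (hptS t ht θ) (pt t₀ π) (hptS t₀ ht₀ π)]
      exact hp₀
    -- hence Qi = 0 on the domain
    have hQall : ∀ t ∈ Iio (Real.log R), Qi u t = 0 := by
      intro t ht
      have : Qi u t = ∫ θ in (0:ℝ)..(2 * π), (0:ℝ) := by
        apply intervalIntegral.integral_congr
        intro θ _
        simp [V, hu0 t ht θ]
      simpa using this
    -- the function is 0 on Iio (log R); convexity is trivial
    refine ⟨convex_Iio _, ?_⟩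
    intro x hx y hy a b ha hb hab
    have hmem : a • x + b • y ∈ Iio (Real.log R) := (convex_Iio _) hx hy ha hb hab
    have e1 : Qi u x * Real.exp x = 0 := by rw [hQall x hx]; ring
    have e2 : Qi u y * Real.exp y = 0 := by rw [hQall y hy]; ring
    have e3 : Qi u (a • x + b • y) * Real.exp (a • x + b • y) = 0 := by
      rw [hQall _ hmem]; ring
    simp only [e1, e2, e3, Real.log_zero]
    simp


end LogCvxHarm

end

theorem log_convexity_harmonic_disk
    (R : ℝ) (hR : 0 < R) (u : ℝ × ℝ → ℝ)
    (hu_smooth : ContDiffOn ℝ 2 u (Metric.ball (0 : ℝ × ℝ) R))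
    (hu_harm : ∀ p ∈ Metric.ball (0 : ℝ × ℝ) R,
      deriv (fun s => deriv (fun t => u (t, p.2)) s) p.1 +
        deriv (fun s => deriv (fun t => u (p.1, t)) s) p.2 = 0) :
    ConvexOn ℝ (Set.Iio (Real.log R))
      (fun t => Real.log (∫ θ in (0:ℝ)..(2 * Real.pi),
        (u (Real.exp t * Real.cos θ, Real.exp t * Real.sin θ)) ^ 2 * Real.exp t)) := by
  exact LogCvxHarm.main u hR hu_smooth hu_harm
end

section
/- Let u be harmonic on B(0,R) ⊂ ℝ² and q(r) = ∫_{0}^{2π} u(r cos θ, r sin θ)² r dθ. Then q'(r) ≥ q(r)/r for 0 < r < R; in particular q is nondecreasing. -/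
open Metric Real MeasureTheory intervalIntegral Set Filter

namespace HDQG

noncomputable section

def cc (ρ θ : ℝ) : ℝ × ℝ := (ρ * Real.cos θ, ρ * Real.sin θ)

variable (u : ℝ × ℝ → ℝ)

def W (ρ θ : ℝ) : ℝ := u (cc ρ θ)
def F : (ℝ × ℝ) → (ℝ × ℝ) →L[ℝ] ℝ := fderiv ℝ u
def B : (ℝ × ℝ) → (ℝ × ℝ) →L[ℝ] (ℝ × ℝ) →L[ℝ] ℝ := fderiv ℝ (fderiv ℝ u)
def Wr (ρ θ : ℝ) : ℝ := F u (cc ρ θ) (Real.cos θ, Real.sin θ)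
def Wt (ρ θ : ℝ) : ℝ := F u (cc ρ θ) (ρ * -Real.sin θ, ρ * Real.cos θ)
def Wrr (ρ θ : ℝ) : ℝ := B u (cc ρ θ) (Real.cos θ, Real.sin θ) (Real.cos θ, Real.sin θ)
def Wtt (ρ θ : ℝ) : ℝ :=
  B u (cc ρ θ) (ρ * -Real.sin θ, ρ * Real.cos θ) (ρ * -Real.sin θ, ρ * Real.cos θ)
    + F u (cc ρ θ) (ρ * -Real.cos θ, ρ * -Real.sin θ)
def DP (ρ θ : ℝ) : ℝ :=
  1 * (W u ρ θ * Wr u ρ θ) + ρ * (Wr u ρ θ * Wr u ρ θ + W u ρ θ * Wrr u ρ θ)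

theorem lin_expand (L : (ℝ × ℝ) →L[ℝ] ℝ) (a b : ℝ) :
    L (a, b) = a * L (1, 0) + b * L (0, 1) := by
  have h : ((a, b) : ℝ × ℝ) = a • ((1 : ℝ), (0 : ℝ)) + b • ((0 : ℝ), (1 : ℝ)) := by
    simp [Prod.ext_iff]
  rw [h, map_add, _root_.map_smul, _root_.map_smul, smul_eq_mul, smul_eq_mul]

theorem bil_expand (Bx : (ℝ × ℝ) →L[ℝ] (ℝ × ℝ) →L[ℝ] ℝ) (a b a' b' : ℝ) :
    Bx (a, b) (a', b') = a * a' * Bx (1, 0) (1, 0) + a * b' * Bx (1, 0) (0, 1)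
      + b * a' * Bx (0, 1) (1, 0) + b * b' * Bx (0, 1) (0, 1) := by
  have h : ((a, b) : ℝ × ℝ) = a • ((1 : ℝ), (0 : ℝ)) + b • ((0 : ℝ), (1 : ℝ)) := by
    simp [Prod.ext_iff]
  rw [h, map_add, _root_.map_smul, _root_.map_smul]
  simp only [ContinuousLinearMap.add_apply, ContinuousLinearMap.smul_apply, smul_eq_mul]
  rw [lin_expand (Bx (1, 0)) a' b', lin_expand (Bx (0, 1)) a' b']
  ring

theorem norm_pair_le {a b C : ℝ} (ha : |a| ≤ C) (hb : |b| ≤ C) :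
    ‖((a, b) : ℝ × ℝ)‖ ≤ C := by
  rw [Prod.norm_def]
  simp only [Real.norm_eq_abs]
  exact max_le ha hb

theorem cc_mem_closed {r ρ : ℝ} (h : |ρ| ≤ r) (θ : ℝ) :
    cc ρ θ ∈ closedBall (0 : ℝ × ℝ) r := by
  rw [mem_closedBall_zero_iff]
  refine norm_pair_le ?_ ?_
  · rw [abs_mul]
    calc |ρ| * |Real.cos θ| ≤ |ρ| * 1 := by
          exact mul_le_mul_of_nonneg_left (Real.abs_cos_le_one θ) (abs_nonneg ρ)
      _ ≤ r := by simpa using h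
  · rw [abs_mul]
    calc |ρ| * |Real.sin θ| ≤ |ρ| * 1 := by
          exact mul_le_mul_of_nonneg_left (Real.abs_sin_le_one θ) (abs_nonneg ρ)
      _ ≤ r := by simpa using h

theorem cc_mem {R ρ : ℝ} (h : |ρ| < R) (θ : ℝ) : cc ρ θ ∈ ball (0 : ℝ × ℝ) R := by
  have := cc_mem_closed (le_refl |ρ|) θ
  exact mem_ball_zero_iff.2 (lt_of_le_of_lt (mem_closedBall_zero_iff.1 this) h)

theorem cont_cc (ρ : ℝ) : Continuous (cc ρ) := by
  unfold cc; fun_prop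

theorem norm_cs_le (θ : ℝ) : ‖((Real.cos θ, Real.sin θ) : ℝ × ℝ)‖ ≤ 1 :=
  norm_pair_le (Real.abs_cos_le_one θ) (Real.abs_sin_le_one θ)

variable {R : ℝ} (hu : ContDiffOn ℝ 2 u (Metric.ball (0 : ℝ × ℝ) R))

section Smooth
include hu

theorem hasF {x : ℝ × ℝ} (hx : x ∈ ball (0 : ℝ × ℝ) R) : HasFDerivAt u (F u x) x := by
  have h2 : ContDiffAt ℝ 2 u x := hu.contDiffAt (isOpen_ball.mem_nhds hx)
  exact (h2.differentiableAt (by norm_num)).hasFDerivAt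

theorem contDiffOn_F : ContDiffOn ℝ 1 (F u) (ball (0 : ℝ × ℝ) R) :=
  hu.fderiv_of_isOpen isOpen_ball (by norm_num)

theorem hasB {x : ℝ × ℝ} (hx : x ∈ ball (0 : ℝ × ℝ) R) : HasFDerivAt (F u) (B u x) x := by
  have := ((contDiffOn_F u hu).differentiableOn one_ne_zero).differentiableAt
    (isOpen_ball.mem_nhds hx)
  exact this.hasFDerivAt

theorem contOn_F : ContinuousOn (F u) (ball (0 : ℝ × ℝ) R) := (contDiffOn_F u hu).continuousOn

theorem contOn_B : ContinuousOn (B u) (ball (0 : ℝ × ℝ) R) :=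
  (contDiffOn_F u hu).continuousOn_fderiv_of_isOpen isOpen_ball le_rfl

end Smooth

section Derivs
include hu

omit hu in
theorem hasDeriv_cc_rho (θ ρ : ℝ) :
    HasDerivAt (fun ρ' => cc ρ' θ) ((Real.cos θ, Real.sin θ) : ℝ × ℝ) ρ := by
  have h1 : HasDerivAt (fun ρ' : ℝ => ρ' * Real.cos θ) (Real.cos θ) ρ := by
    simpa using (hasDerivAt_id ρ).mul_const (Real.cos θ)
  have h2 : HasDerivAt (fun ρ' : ℝ => ρ' * Real.sin θ) (Real.sin θ) ρ := by
    simpa using (hasDerivAt_id ρ).mul_const (Real.sin θ)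
  exact h1.prodMk h2

omit hu in
theorem hasDeriv_cc_theta (ρ θ : ℝ) :
    HasDerivAt (fun θ' => cc ρ θ') ((ρ * -Real.sin θ, ρ * Real.cos θ) : ℝ × ℝ) θ :=
  ((Real.hasDerivAt_cos θ).const_mul ρ).prodMk ((Real.hasDerivAt_sin θ).const_mul ρ)

omit hu in
theorem hasDeriv_nv (ρ θ : ℝ) :
    HasDerivAt (fun θ' => ((ρ * -Real.sin θ', ρ * Real.cos θ') : ℝ × ℝ))
      ((ρ * -Real.cos θ, ρ * -Real.sin θ) : ℝ × ℝ) θ := by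
  have h1 : HasDerivAt (fun θ' : ℝ => ρ * -Real.sin θ') (ρ * -Real.cos θ) θ :=
    ((Real.hasDerivAt_sin θ).neg).const_mul ρ
  have h2 : HasDerivAt (fun θ' : ℝ => ρ * Real.cos θ') (ρ * -Real.sin θ) θ :=
    (Real.hasDerivAt_cos θ).const_mul ρ
  exact h1.prodMk h2

theorem hasDeriv_W_rho {ρ θ : ℝ} (hρ : |ρ| < R) :
    HasDerivAt (fun ρ' => W u ρ' θ) (Wr u ρ θ) ρ :=
  (hasF u hu (cc_mem hρ θ)).comp_hasDerivAt ρ (hasDeriv_cc_rho θ ρ)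

theorem hasDeriv_Wr_rho {ρ θ : ℝ} (hρ : |ρ| < R) :
    HasDerivAt (fun ρ' => Wr u ρ' θ) (Wrr u ρ θ) ρ := by
  have hc : HasDerivAt (fun ρ' => F u (cc ρ' θ))
      (B u (cc ρ θ) (Real.cos θ, Real.sin θ)) ρ :=
    (hasB u hu (cc_mem hρ θ)).comp_hasDerivAt ρ (hasDeriv_cc_rho θ ρ)
  have := hc.clm_apply (hasDerivAt_const ρ ((Real.cos θ, Real.sin θ) : ℝ × ℝ))
  simpa [Wr, Wrr] using this

theorem hasDeriv_W_theta {ρ θ : ℝ} (hρ : |ρ| < R) :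
    HasDerivAt (fun θ' => W u ρ θ') (Wt u ρ θ) θ :=
  (hasF u hu (cc_mem hρ θ)).comp_hasDerivAt θ (hasDeriv_cc_theta ρ θ)

theorem hasDeriv_Wt_theta {ρ θ : ℝ} (hρ : |ρ| < R) :
    HasDerivAt (fun θ' => Wt u ρ θ') (Wtt u ρ θ) θ := by
  have hc : HasDerivAt (fun θ' => F u (cc ρ θ'))
      (B u (cc ρ θ) (ρ * -Real.sin θ, ρ * Real.cos θ)) θ :=
    (hasB u hu (cc_mem hρ θ)).comp_hasDerivAt θ (hasDeriv_cc_theta ρ θ)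
  exact hc.clm_apply (hasDeriv_nv ρ θ)

end Derivs

section Harm
include hu

theorem trace_zero
    (hu_harm : ∀ p ∈ Metric.ball (0 : ℝ × ℝ) R,
      deriv (fun s => deriv (fun t => u (t, p.2)) s) p.1 +
        deriv (fun s => deriv (fun t => u (p.1, t)) s) p.2 = 0)
    {x : ℝ × ℝ} (hx : x ∈ ball (0 : ℝ × ℝ) R) :
    B u x (1, 0) (1, 0) + B u x (0, 1) (0, 1) = 0 := by
  have hxx : deriv (fun s => deriv (fun t => u (t, x.2)) s) x.1 = B u x (1, 0) (1, 0) := by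
    have hopen : IsOpen {s : ℝ | ((s, x.2) : ℝ × ℝ) ∈ ball (0 : ℝ × ℝ) R} :=
      isOpen_ball.preimage (continuous_id.prodMk continuous_const)
    have hmem' : x.1 ∈ {s : ℝ | ((s, x.2) : ℝ × ℝ) ∈ ball (0 : ℝ × ℝ) R} := by
      exact hx
    have hev : (fun s => deriv (fun t => u (t, x.2)) s)
        =ᶠ[nhds x.1] (fun s => F u (s, x.2) (1, 0)) := by
      filter_upwards [hopen.mem_nhds hmem'] with s hs
      exact ((hasF u hu hs).comp_hasDerivAt s
        ((hasDerivAt_id s).prodMk (hasDerivAt_const s x.2))).deriv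
    rw [hev.deriv_eq]
    have hcl : HasDerivAt (fun s => F u (s, x.2)) (B u x (1, 0)) x.1 :=
      (hasB u hu hx).comp_hasDerivAt x.1
        ((hasDerivAt_id x.1).prodMk (hasDerivAt_const x.1 x.2))
    have := hcl.clm_apply (hasDerivAt_const x.1 (((1 : ℝ), (0 : ℝ)) : ℝ × ℝ))
    simpa using this.deriv
  have hyy : deriv (fun s => deriv (fun t => u (x.1, t)) s) x.2 = B u x (0, 1) (0, 1) := by
    have hopen : IsOpen {s : ℝ | ((x.1, s) : ℝ × ℝ) ∈ ball (0 : ℝ × ℝ) R} :=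
      isOpen_ball.preimage (continuous_const.prodMk continuous_id)
    have hmem' : x.2 ∈ {s : ℝ | ((x.1, s) : ℝ × ℝ) ∈ ball (0 : ℝ × ℝ) R} := by
      exact hx
    have hev : (fun s => deriv (fun t => u (x.1, t)) s)
        =ᶠ[nhds x.2] (fun s => F u (x.1, s) (0, 1)) := by
      filter_upwards [hopen.mem_nhds hmem'] with s hs
      exact ((hasF u hu hs).comp_hasDerivAt s
        ((hasDerivAt_const s x.1).prodMk (hasDerivAt_id s))).deriv
    rw [hev.deriv_eq]
    have hcl : HasDerivAt (fun s => F u (x.1, s)) (B u x (0, 1)) x.2 :=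
      (hasB u hu hx).comp_hasDerivAt x.2
        ((hasDerivAt_const x.2 x.1).prodMk (hasDerivAt_id x.2))
    have := hcl.clm_apply (hasDerivAt_const x.2 (((0 : ℝ), (1 : ℝ)) : ℝ × ℝ))
    simpa using this.deriv
  rw [← hxx, ← hyy]
  exact hu_harm x hx

theorem polar
    (hu_harm : ∀ p ∈ Metric.ball (0 : ℝ × ℝ) R,
      deriv (fun s => deriv (fun t => u (t, p.2)) s) p.1 +
        deriv (fun s => deriv (fun t => u (p.1, t)) s) p.2 = 0)
    {ρ θ : ℝ} (hρ : |ρ| < R) :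
    ρ ^ 2 * Wrr u ρ θ + ρ * Wr u ρ θ + Wtt u ρ θ = 0 := by
  have h := trace_zero u hu hu_harm (cc_mem hρ θ)
  have e1 := bil_expand (B u (cc ρ θ)) (Real.cos θ) (Real.sin θ) (Real.cos θ) (Real.sin θ)
  have e2 := bil_expand (B u (cc ρ θ)) (ρ * -Real.sin θ) (ρ * Real.cos θ)
    (ρ * -Real.sin θ) (ρ * Real.cos θ)
  have e3 := lin_expand (F u (cc ρ θ)) (Real.cos θ) (Real.sin θ)
  have e4 := lin_expand (F u (cc ρ θ)) (ρ * -Real.cos θ) (ρ * -Real.sin θ)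
  unfold Wrr Wtt Wr
  rw [e2, e1, e4, e3]
  linear_combination (ρ ^ 2 * (Real.cos θ ^ 2 + Real.sin θ ^ 2)) * h

theorem DP_eq
    (hu_harm : ∀ p ∈ Metric.ball (0 : ℝ × ℝ) R,
      deriv (fun s => deriv (fun t => u (t, p.2)) s) p.1 +
        deriv (fun s => deriv (fun t => u (p.1, t)) s) p.2 = 0)
    {ρ θ : ℝ} (hρ : |ρ| < R) (hρ0 : ρ ≠ 0) :
    DP u ρ θ = ρ * (Wr u ρ θ * Wr u ρ θ) - (1 / ρ) * (W u ρ θ * Wtt u ρ θ) := by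
  have hp := polar u hu hu_harm (θ := θ) hρ
  unfold DP
  field_simp
  linear_combination (W u ρ θ) * hp

end Harm

def f (ρ : ℝ) : ℝ := ∫ θ in (0:ℝ)..(2 * Real.pi), (W u ρ θ) ^ 2
def g1 (ρ : ℝ) : ℝ := ∫ θ in (0:ℝ)..(2 * Real.pi), ρ * (W u ρ θ * Wr u ρ θ)

section Cont
include hu

theorem cont_W {ρ : ℝ} (hρ : |ρ| < R) : Continuous (fun θ => W u ρ θ) :=
  hu.continuousOn.comp_continuous (cont_cc ρ) (cc_mem hρ)

theorem cont_Fc {ρ : ℝ} (hρ : |ρ| < R) : Continuous (fun θ => F u (cc ρ θ)) :=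
  (contOn_F u hu).comp_continuous (cont_cc ρ) (cc_mem hρ)

theorem cont_Bc {ρ : ℝ} (hρ : |ρ| < R) : Continuous (fun θ => B u (cc ρ θ)) :=
  (contOn_B u hu).comp_continuous (cont_cc ρ) (cc_mem hρ)

theorem cont_Wr {ρ : ℝ} (hρ : |ρ| < R) : Continuous (fun θ => Wr u ρ θ) :=
  (cont_Fc u hu hρ).clm_apply (by fun_prop)

theorem cont_Wt {ρ : ℝ} (hρ : |ρ| < R) : Continuous (fun θ => Wt u ρ θ) :=
  (cont_Fc u hu hρ).clm_apply (by fun_prop)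

theorem cont_Wrr {ρ : ℝ} (hρ : |ρ| < R) : Continuous (fun θ => Wrr u ρ θ) :=
  ((cont_Bc u hu hρ).clm_apply (by fun_prop)).clm_apply (by fun_prop)

theorem cont_Wtt {ρ : ℝ} (hρ : |ρ| < R) : Continuous (fun θ => Wtt u ρ θ) :=
  (((cont_Bc u hu hρ).clm_apply (by fun_prop)).clm_apply (by fun_prop)).add
    ((cont_Fc u hu hρ).clm_apply (by fun_prop))

end Cont

omit hu in
theorem abs_mul_le' {a b A C : ℝ} (ha : |a| ≤ A) (hb : |b| ≤ C) : |a * b| ≤ A * C := by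
  rw [abs_mul]
  exact mul_le_mul ha hb (abs_nonneg b) (le_trans (abs_nonneg a) ha)

section Bounds

variable {r₂ Cu CF CB : ℝ}

theorem abs_W_le (hCu : ∀ x ∈ closedBall (0 : ℝ × ℝ) r₂, ‖u x‖ ≤ Cu)
    {ρ : ℝ} (hρ : |ρ| ≤ r₂) (θ : ℝ) : |W u ρ θ| ≤ Cu := by
  have := hCu _ (cc_mem_closed hρ θ)
  simpa [W, Real.norm_eq_abs] using this

theorem abs_Wr_le (hCF : ∀ x ∈ closedBall (0 : ℝ × ℝ) r₂, ‖F u x‖ ≤ CF)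
    {ρ : ℝ} (hρ : |ρ| ≤ r₂) (θ : ℝ) : |Wr u ρ θ| ≤ CF := by
  have h1 : |Wr u ρ θ| ≤ ‖F u (cc ρ θ)‖ * ‖((Real.cos θ, Real.sin θ) : ℝ × ℝ)‖ := by
    simpa [Wr, Real.norm_eq_abs] using (F u (cc ρ θ)).le_opNorm
      (((Real.cos θ, Real.sin θ)) : ℝ × ℝ)
  refine h1.trans ?_
  calc ‖F u (cc ρ θ)‖ * ‖((Real.cos θ, Real.sin θ) : ℝ × ℝ)‖
      ≤ CF * 1 := mul_le_mul (hCF _ (cc_mem_closed hρ θ)) (norm_cs_le θ) (norm_nonneg _)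
        (le_trans (norm_nonneg _) (hCF _ (cc_mem_closed hρ θ)))
    _ = CF := mul_one CF

theorem abs_Wrr_le (hCB : ∀ x ∈ closedBall (0 : ℝ × ℝ) r₂, ‖B u x‖ ≤ CB)
    {ρ : ℝ} (hρ : |ρ| ≤ r₂) (θ : ℝ) : |Wrr u ρ θ| ≤ CB := by
  have hBx : ‖B u (cc ρ θ)‖ ≤ CB := hCB _ (cc_mem_closed hρ θ)
  have hB0 : (0:ℝ) ≤ CB := le_trans (norm_nonneg (B u (cc ρ θ))) hBx
  have h1 : |Wrr u ρ θ| ≤ ‖B u (cc ρ θ) ((Real.cos θ, Real.sin θ) : ℝ × ℝ)‖ *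
      ‖((Real.cos θ, Real.sin θ) : ℝ × ℝ)‖ := by
    simpa [Wrr, Real.norm_eq_abs] using
      (B u (cc ρ θ) (((Real.cos θ, Real.sin θ)) : ℝ × ℝ)).le_opNorm
        (((Real.cos θ, Real.sin θ)) : ℝ × ℝ)
  have h2 : ‖B u (cc ρ θ) ((Real.cos θ, Real.sin θ) : ℝ × ℝ)‖ ≤ CB := by
    calc ‖B u (cc ρ θ) ((Real.cos θ, Real.sin θ) : ℝ × ℝ)‖
        ≤ ‖B u (cc ρ θ)‖ * ‖((Real.cos θ, Real.sin θ) : ℝ × ℝ)‖ :=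
          (B u (cc ρ θ)).le_opNorm _
      _ ≤ CB * 1 := mul_le_mul hBx (norm_cs_le θ) (norm_nonneg _) hB0
      _ = CB := mul_one CB
  refine h1.trans ?_
  calc ‖B u (cc ρ θ) ((Real.cos θ, Real.sin θ) : ℝ × ℝ)‖ *
        ‖((Real.cos θ, Real.sin θ) : ℝ × ℝ)‖
      ≤ CB * 1 := mul_le_mul h2 (norm_cs_le θ) (norm_nonneg _) hB0
    _ = CB := mul_one CB

end Bounds

section DUI
include hu

theorem hasDeriv_f {ρ₀ : ℝ} (hρ₀ : |ρ₀| < R) :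
    HasDerivAt (f u) (∫ θ in (0:ℝ)..(2 * Real.pi), 2 * (W u ρ₀ θ * Wr u ρ₀ θ)) ρ₀ := by
  set ε := (R - |ρ₀|) / 2 with hεdef
  set r₂ := (|ρ₀| + R) / 2 with hr₂def
  have hεpos : 0 < ε := by rw [hεdef]; linarith
  have hr₂R : r₂ < R := by rw [hr₂def]; linarith
  have hr₂0 : 0 ≤ r₂ := by rw [hr₂def]; linarith [abs_nonneg ρ₀]
  have hmem : ∀ x ∈ ball ρ₀ ε, |x| ≤ r₂ := by
    intro x hx
    have h1 : |x - ρ₀| < ε := by rwa [mem_ball, Real.dist_eq] at hx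
    have h2 : |x| ≤ |x - ρ₀| + |ρ₀| := by
      calc |x| = |x - ρ₀ + ρ₀| := by ring_nf
        _ ≤ |x - ρ₀| + |ρ₀| := abs_add_le _ _
    rw [hεdef] at h1; rw [hr₂def]; linarith
  have hmemR : ∀ x ∈ ball ρ₀ ε, |x| < R := fun x hx => lt_of_le_of_lt (hmem x hx) hr₂R
  obtain ⟨Cu, hCu⟩ := (isCompact_closedBall (0 : ℝ × ℝ) r₂).exists_bound_of_continuousOn
    (hu.continuousOn.mono (closedBall_subset_ball hr₂R))
  obtain ⟨CF, hCF⟩ := (isCompact_closedBall (0 : ℝ × ℝ) r₂).exists_bound_of_continuousOn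
    ((contOn_F u hu).mono (closedBall_subset_ball hr₂R))
  have hρ₀ε : |ρ₀| ≤ r₂ := hmem ρ₀ (mem_ball_self hεpos)
  refine (intervalIntegral.hasDerivAt_integral_of_dominated_loc_of_deriv_le
    (F := fun ρ θ => (W u ρ θ) ^ 2) (F' := fun ρ θ => 2 * (W u ρ θ * Wr u ρ θ))
    (bound := fun _ => 2 * (Cu * CF)) (Metric.ball_mem_nhds ρ₀ hεpos) ?_ ?_ ?_ ?_ ?_ ?_).2
  · exact eventually_of_mem (Metric.ball_mem_nhds ρ₀ hεpos)
      (fun x hx => ((cont_W u hu (hmemR x hx)).pow 2).aestronglyMeasurable)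
  · exact ((cont_W u hu hρ₀).pow 2).intervalIntegrable 0 (2 * Real.pi)
  · exact (continuous_const.mul
      ((cont_W u hu hρ₀).mul (cont_Wr u hu hρ₀))).aestronglyMeasurable
  · refine Filter.Eventually.of_forall fun θ _ x hx => ?_
    rw [Real.norm_eq_abs]
    exact abs_mul_le' (by simp) (abs_mul_le' (abs_W_le u hCu (hmem x hx) θ)
      (abs_Wr_le u hCF (hmem x hx) θ))
  · exact intervalIntegrable_const
  · refine Filter.Eventually.of_forall fun θ _ x hx => ?_
    have h := (hasDeriv_W_rho u hu (θ := θ) (hmemR x hx)).fun_pow 2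
    simpa [pow_one, mul_assoc] using h

theorem hasDeriv_g1 {ρ₀ : ℝ} (hρ₀ : |ρ₀| < R) :
    HasDerivAt (g1 u) (∫ θ in (0:ℝ)..(2 * Real.pi), DP u ρ₀ θ) ρ₀ := by
  set ε := (R - |ρ₀|) / 2 with hεdef
  set r₂ := (|ρ₀| + R) / 2 with hr₂def
  have hεpos : 0 < ε := by rw [hεdef]; linarith
  have hr₂R : r₂ < R := by rw [hr₂def]; linarith
  have hr₂0 : 0 ≤ r₂ := by rw [hr₂def]; linarith [abs_nonneg ρ₀]
  have hmem : ∀ x ∈ ball ρ₀ ε, |x| ≤ r₂ := by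
    intro x hx
    have h1 : |x - ρ₀| < ε := by rwa [mem_ball, Real.dist_eq] at hx
    have h2 : |x| ≤ |x - ρ₀| + |ρ₀| := by
      calc |x| = |x - ρ₀ + ρ₀| := by ring_nf
        _ ≤ |x - ρ₀| + |ρ₀| := abs_add_le _ _
    rw [hεdef] at h1; rw [hr₂def]; linarith
  have hmemR : ∀ x ∈ ball ρ₀ ε, |x| < R := fun x hx => lt_of_le_of_lt (hmem x hx) hr₂R
  obtain ⟨Cu, hCu⟩ := (isCompact_closedBall (0 : ℝ × ℝ) r₂).exists_bound_of_continuousOn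
    (hu.continuousOn.mono (closedBall_subset_ball hr₂R))
  obtain ⟨CF, hCF⟩ := (isCompact_closedBall (0 : ℝ × ℝ) r₂).exists_bound_of_continuousOn
    ((contOn_F u hu).mono (closedBall_subset_ball hr₂R))
  obtain ⟨CB, hCB⟩ := IsCompact.exists_bound_of_continuousOn
    (E := (ℝ × ℝ) →L[ℝ] (ℝ × ℝ) →L[ℝ] ℝ) (isCompact_closedBall (0 : ℝ × ℝ) r₂)
    ((contOn_B u hu).mono (closedBall_subset_ball hr₂R))
  refine (intervalIntegral.hasDerivAt_integral_of_dominated_loc_of_deriv_le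
    (F := fun ρ θ => ρ * (W u ρ θ * Wr u ρ θ)) (F' := fun ρ θ => DP u ρ θ)
    (bound := fun _ => Cu * CF + r₂ * (CF * CF + Cu * CB)) (Metric.ball_mem_nhds ρ₀ hεpos) ?_ ?_ ?_ ?_ ?_ ?_).2
  · refine eventually_of_mem (Metric.ball_mem_nhds ρ₀ hεpos) (fun x hx => ?_)
    exact (continuous_const.mul
      ((cont_W u hu (hmemR x hx)).mul (cont_Wr u hu (hmemR x hx)))).aestronglyMeasurable
  · exact (continuous_const.mul
      ((cont_W u hu hρ₀).mul (cont_Wr u hu hρ₀))).intervalIntegrable 0 (2 * Real.pi)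
  · have : Continuous (fun θ => DP u ρ₀ θ) := by
      unfold DP
      exact (continuous_const.mul ((cont_W u hu hρ₀).mul (cont_Wr u hu hρ₀))).add
        (continuous_const.mul (((cont_Wr u hu hρ₀).mul (cont_Wr u hu hρ₀)).add
          ((cont_W u hu hρ₀).mul (cont_Wrr u hu hρ₀))))
    exact this.aestronglyMeasurable
  · refine Filter.Eventually.of_forall fun θ _ x hx => ?_
    rw [Real.norm_eq_abs]
    unfold DP
    refine (abs_add_le _ _).trans (add_le_add ?_ ?_)
    · rw [one_mul]
      exact abs_mul_le' (abs_W_le u hCu (hmem x hx) θ) (abs_Wr_le u hCF (hmem x hx) θ)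
    · exact abs_mul_le' (hmem x hx) ((abs_add_le _ _).trans (add_le_add
        (abs_mul_le' (abs_Wr_le u hCF (hmem x hx) θ) (abs_Wr_le u hCF (hmem x hx) θ))
        (abs_mul_le' (abs_W_le u hCu (hmem x hx) θ) (abs_Wrr_le u hCB (hmem x hx) θ))))
  · exact intervalIntegrable_const
  · refine Filter.Eventually.of_forall fun θ _ x hx => ?_
    exact (hasDerivAt_id x).mul
      ((hasDeriv_W_rho u hu (hmemR x hx)).mul (hasDeriv_Wr_rho u hu (hmemR x hx)))

end DUI

section Core
include hu

theorem int_W_Wtt {ρ : ℝ} (hρ : |ρ| < R) :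
    ∫ θ in (0:ℝ)..(2 * Real.pi), W u ρ θ * Wtt u ρ θ
      = - ∫ θ in (0:ℝ)..(2 * Real.pi), Wt u ρ θ * Wt u ρ θ := by
  have h := intervalIntegral.integral_mul_deriv_eq_deriv_mul_of_hasDerivAt
    (a := 0) (b := 2 * Real.pi)
    (u := fun θ => W u ρ θ) (v := fun θ => Wt u ρ θ)
    (u' := fun θ => Wt u ρ θ) (v' := fun θ => Wtt u ρ θ)
    ((cont_W u hu hρ).continuousOn) ((cont_Wt u hu hρ).continuousOn)
    (fun θ _ => hasDeriv_W_theta u hu hρ) (fun θ _ => hasDeriv_Wt_theta u hu hρ)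
    ((cont_Wt u hu hρ).intervalIntegrable 0 (2 * Real.pi))
    ((cont_Wtt u hu hρ).intervalIntegrable 0 (2 * Real.pi))
  have hW2 : W u ρ (2 * Real.pi) = W u ρ 0 := by
    unfold W cc; simp
  have hWt2 : Wt u ρ (2 * Real.pi) = Wt u ρ 0 := by
    unfold Wt cc; simp
  rw [h]; simp only [hW2, hWt2]; ring

theorem int_DP_nonneg
    (hu_harm : ∀ p ∈ Metric.ball (0 : ℝ × ℝ) R,
      deriv (fun s => deriv (fun t => u (t, p.2)) s) p.1 +
        deriv (fun s => deriv (fun t => u (p.1, t)) s) p.2 = 0)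
    {ρ : ℝ} (hρ : ρ ∈ Set.Ioo (0:ℝ) R) :
    0 ≤ ∫ θ in (0:ℝ)..(2 * Real.pi), DP u ρ θ := by
  have hρR : |ρ| < R := by rw [abs_of_pos hρ.1]; exact hρ.2
  have hρ0 : ρ ≠ 0 := ne_of_gt hρ.1
  have hDP : ∀ θ, DP u ρ θ
      = ρ * (Wr u ρ θ * Wr u ρ θ) - (1 / ρ) * (W u ρ θ * Wtt u ρ θ) :=
    fun θ => DP_eq u hu hu_harm hρR hρ0
  have hint1 : IntervalIntegrable (fun θ => ρ * (Wr u ρ θ * Wr u ρ θ))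
      volume 0 (2 * Real.pi) :=
    (continuous_const.mul ((cont_Wr u hu hρR).mul (cont_Wr u hu hρR))).intervalIntegrable _ _
  have hint2 : IntervalIntegrable (fun θ => (1 / ρ) * (W u ρ θ * Wtt u ρ θ))
      volume 0 (2 * Real.pi) :=
    (continuous_const.mul ((cont_W u hu hρR).mul (cont_Wtt u hu hρR))).intervalIntegrable _ _
  simp only [hDP]
  rw [intervalIntegral.integral_sub hint1 hint2, intervalIntegral.integral_const_mul,
    intervalIntegral.integral_const_mul, int_W_Wtt u hu hρR]
  have h1 : 0 ≤ ∫ θ in (0:ℝ)..(2 * Real.pi), Wr u ρ θ * Wr u ρ θ :=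
    intervalIntegral.integral_nonneg (by positivity) (fun θ _ => mul_self_nonneg _)
  have h2 : 0 ≤ ∫ θ in (0:ℝ)..(2 * Real.pi), Wt u ρ θ * Wt u ρ θ :=
    intervalIntegral.integral_nonneg (by positivity) (fun θ _ => mul_self_nonneg _)
  have h3 : (0:ℝ) ≤ 1 / ρ := by have := hρ.1; positivity
  nlinarith [mul_nonneg hρ.1.le h1, mul_nonneg h3 h2]

omit hu in
theorem g1_zero : g1 u 0 = 0 := by unfold g1; simp

theorem g1_nonneg
    (hu_harm : ∀ p ∈ Metric.ball (0 : ℝ × ℝ) R,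
      deriv (fun s => deriv (fun t => u (t, p.2)) s) p.1 +
        deriv (fun s => deriv (fun t => u (p.1, t)) s) p.2 = 0)
    {r : ℝ} (hr : r ∈ Set.Ioo (0:ℝ) R) : 0 ≤ g1 u r := by
  have hmono : MonotoneOn (g1 u) (Set.Icc 0 r) := by
    apply monotoneOn_of_deriv_nonneg (convex_Icc 0 r)
    · intro ρ hρ
      have hρR : |ρ| < R := by
        rw [abs_of_nonneg hρ.1]; exact lt_of_le_of_lt hρ.2 hr.2
      exact (hasDeriv_g1 u hu hρR).continuousAt.continuousWithinAt
    · rw [interior_Icc]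
      intro ρ hρ
      have hρR : |ρ| < R := by
        rw [abs_of_pos hρ.1]; exact lt_trans hρ.2 hr.2
      exact (hasDeriv_g1 u hu hρR).differentiableAt.differentiableWithinAt
    · intro ρ hρ
      rw [interior_Icc] at hρ
      have hρR : |ρ| < R := by
        rw [abs_of_pos hρ.1]; exact lt_trans hρ.2 hr.2
      rw [(hasDeriv_g1 u hu hρR).deriv]
      exact int_DP_nonneg u hu hu_harm ⟨hρ.1, lt_trans hρ.2 hr.2⟩
  have h := hmono (Set.left_mem_Icc.2 hr.1.le) (Set.right_mem_Icc.2 hr.1.le) hr.1.le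
  rwa [g1_zero] at h

end Core

omit hu in
theorem f_nonneg (ρ : ℝ) : 0 ≤ f u ρ :=
  intervalIntegral.integral_nonneg (by positivity) (fun θ _ => sq_nonneg _)

end

end HDQG

open HDQG in
theorem harmonic_disk_q_growth
    (R : ℝ) (hR : 0 < R) (u : ℝ × ℝ → ℝ)
    (hu_smooth : ContDiffOn ℝ 2 u (Metric.ball (0 : ℝ × ℝ) R))
    (hu_harm : ∀ p ∈ Metric.ball (0 : ℝ × ℝ) R,
      deriv (fun s => deriv (fun t => u (t, p.2)) s) p.1 +
        deriv (fun s => deriv (fun t => u (p.1, t)) s) p.2 = 0) :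
    (∀ r ∈ Set.Ioo (0:ℝ) R,
      deriv (fun ρ => ∫ θ in (0:ℝ)..(2 * Real.pi),
          (u (ρ * Real.cos θ, ρ * Real.sin θ)) ^ 2 * ρ) r ≥
        (∫ θ in (0:ℝ)..(2 * Real.pi),
          (u (r * Real.cos θ, r * Real.sin θ)) ^ 2 * r) / r) ∧
    MonotoneOn (fun ρ => ∫ θ in (0:ℝ)..(2 * Real.pi),
      (u (ρ * Real.cos θ, ρ * Real.sin θ)) ^ 2 * ρ) (Set.Ioo (0:ℝ) R) := by
  have hq : (fun ρ => ∫ θ in (0:ℝ)..(2 * Real.pi),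
      (u (ρ * Real.cos θ, ρ * Real.sin θ)) ^ 2 * ρ) = fun ρ => HDQG.f u ρ * ρ := by
    funext ρ
    rw [intervalIntegral.integral_mul_const]
    rfl
  have habs : ∀ r ∈ Set.Ioo (0:ℝ) R, |r| < R := fun r hr => by
    rw [abs_of_pos hr.1]; exact hr.2
  have hf' : ∀ r ∈ Set.Ioo (0:ℝ) R,
      0 ≤ ∫ θ in (0:ℝ)..(2 * Real.pi), 2 * (W u r θ * Wr u r θ) := by
    intro r hr
    have hg1 := g1_nonneg u hu_smooth hu_harm hr
    have hg1eq : g1 u r = r * ∫ θ in (0:ℝ)..(2 * Real.pi), W u r θ * Wr u r θ := by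
      unfold HDQG.g1
      rw [intervalIntegral.integral_const_mul]
    rw [hg1eq] at hg1
    have h2 : 0 ≤ ∫ θ in (0:ℝ)..(2 * Real.pi), W u r θ * Wr u r θ :=
      nonneg_of_mul_nonneg_right hg1 hr.1
    rw [intervalIntegral.integral_const_mul]
    exact mul_nonneg (by norm_num) h2
  have hderq : ∀ r ∈ Set.Ioo (0:ℝ) R, HasDerivAt (fun ρ => HDQG.f u ρ * ρ)
      ((∫ θ in (0:ℝ)..(2 * Real.pi), 2 * (W u r θ * Wr u r θ)) * r + HDQG.f u r * 1) r :=
    fun r hr => (hasDeriv_f u hu_smooth (habs r hr)).mul (hasDerivAt_id r)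
  constructor
  · intro r hr
    have hq2 : (∫ θ in (0:ℝ)..(2 * Real.pi),
        (u (r * Real.cos θ, r * Real.sin θ)) ^ 2 * r) = HDQG.f u r * r := by
      rw [intervalIntegral.integral_mul_const]
      rfl
    rw [hq, hq2, (hderq r hr).deriv]
    have h1 : HDQG.f u r * r / r = HDQG.f u r :=
      mul_div_cancel_right₀ _ (ne_of_gt hr.1)
    rw [h1]
    have := mul_nonneg (hf' r hr) hr.1.le
    linarith
  · rw [hq]
    apply monotoneOn_of_deriv_nonneg (convex_Ioo 0 R)
    · intro ρ hρ
      exact (hderq ρ hρ).continuousAt.continuousWithinAt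
    · rw [interior_Ioo]
      intro ρ hρ
      exact (hderq ρ hρ).differentiableAt.differentiableWithinAt
    · intro ρ hρ
      rw [interior_Ioo] at hρ
      rw [(hderq ρ hρ).deriv]
      have h1 := mul_nonneg (hf' ρ hρ) hρ.1.le
      have h2 := f_nonneg u ρ
      linarith
end
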